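/- arXiv:0909.3134 — 5 statements merged into one kernel-verified Lean document; each statement's English description precedes it below -/
import Mathlib

section
/- (Lemma 4.4(2), osp(2m+1|2)) Suppose λ ∈ 𝒫 is atypical and μ, ν ∈ 𝒫_λ with μ ≠ ν. Then μ and ν are not block equivalent: ¬(μ ∼ ν). -/
open Finset
open Fin.NatCast

/-- The standard basis vector `ε_i` of `ℚ^{1+m}` (with `ε_0 = δ`). -/
noncomputable def eps (m i : ℕ) : Fin (m+1) → ℚ := Pi.single (i : Fin (m+1)) 1

/-- The bilinear form `⟨λ, μ⟩ = −λ₀μ₀ + Σ_{i=1}^m λ_i μ_i` on `ℚ^{1+m}`. -/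
noncomputable def form (m : ℕ) (l μ : Fin (m+1) → ℚ) : ℚ :=
  -(l 0 * μ 0) + ∑ i : Fin (m+1), (if i = 0 then 0 else l i * μ i)

/-- `ρ` for `osp(2m|2)`: `ρ₀ = 1−m`, `ρ_i = m−i`. -/
noncomputable def rhoD (m : ℕ) : Fin (m+1) → ℚ :=
  fun i => if i = 0 then 1 - (m : ℚ) else (m : ℚ) - (i : ℕ)

/-- `ρ` for `osp(2m+1|2)`: `ρ₀ = 1/2−m`, `ρ_i = m−i+1/2`. -/
noncomputable def rhoB (m : ℕ) : Fin (m+1) → ℚ :=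
  fun i => if i = 0 then 1/2 - (m : ℚ) else (m : ℚ) - (i : ℕ) + 1/2

/-- All coordinates are integers. -/
def IsIntegralWt (m : ℕ) (l : Fin (m+1) → ℚ) : Prop := ∀ i, ∃ z : ℤ, l i = z

/-- Dominant integral weights for `osp(2m|2)`. -/
def PD (m : ℕ) (l : Fin (m+1) → ℚ) : Prop :=
  IsIntegralWt m l ∧ 0 ≤ l 0 ∧
  (∀ i j : ℕ, 1 ≤ i → i ≤ j → j ≤ m - 1 → l (j : Fin (m+1)) ≤ l (i : Fin (m+1))) ∧
  |l (m : Fin (m+1))| ≤ l ((m - 1 : ℕ) : Fin (m+1)) ∧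
  (∀ i : ℕ, 1 ≤ i → i ≤ m - 1 → 0 ≤ l (i : Fin (m+1))) ∧
  (∀ i : ℕ, 1 ≤ i → i ≤ m → l 0 < (i : ℚ) → l (i : Fin (m+1)) = 0)

/-- Dominant integral weights for `osp(2m+1|2)`. -/
def PB (m : ℕ) (l : Fin (m+1) → ℚ) : Prop :=
  IsIntegralWt m l ∧ 0 ≤ l 0 ∧
  (∀ i j : ℕ, 1 ≤ i → i ≤ j → j ≤ m → l (j : Fin (m+1)) ≤ l (i : Fin (m+1))) ∧
  (∀ i : ℕ, 1 ≤ i → i ≤ m → 0 ≤ l (i : Fin (m+1))) ∧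
  (∀ i : ℕ, 1 ≤ i → i ≤ m → l 0 < (i : ℚ) → l (i : Fin (m+1)) = 0)

/-- `λ` is atypical (w.r.t. a given `ρ`): `⟨λ+ρ, δ+s·ε_i⟩ = 0` for some `1 ≤ i ≤ m`, `s = ±1`. -/
def Atyp (m : ℕ) (ρ l : Fin (m+1) → ℚ) : Prop :=
  ∃ i : ℕ, 1 ≤ i ∧ i ≤ m ∧ ∃ s : ℚ, (s = 1 ∨ s = -1) ∧
    form m (l + ρ) (eps m 0 + s • eps m i) = 0

abbrev GLQ (m : ℕ) := (Fin (m+1) → ℚ) ≃ₗ[ℚ] (Fin (m+1) → ℚ)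

/-- Permutations of the coordinates `1, …, m` (fixing coordinate `0`). -/
def permSet (m : ℕ) : Set (GLQ m) :=
  {w | ∃ σ : Equiv.Perm (Fin (m+1)), σ 0 = 0 ∧ ∀ v, w v = v ∘ σ}

/-- The sign change of coordinate `0`. -/
def flip0Set (m : ℕ) : Set (GLQ m) :=
  {w | ∀ v k, w v k = if k = 0 then -(v k) else v k}

/-- Simultaneous sign changes of two coordinates among `1, …, m`. -/
def doubleFlipSet (m : ℕ) : Set (GLQ m) :=
  {w | ∃ i j : Fin (m+1), i ≠ 0 ∧ j ≠ 0 ∧ i ≠ j ∧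
    ∀ v k, w v k = if k = i ∨ k = j then -(v k) else v k}

/-- Sign changes of a single coordinate among `1, …, m`. -/
def singleFlipSet (m : ℕ) : Set (GLQ m) :=
  {w | ∃ i : Fin (m+1), i ≠ 0 ∧ ∀ v k, w v k = if k = i then -(v k) else v k}

/-- The Weyl group for `osp(2m|2)`. -/
def WD (m : ℕ) : Subgroup (GLQ m) :=
  Subgroup.closure (permSet m ∪ doubleFlipSet m ∪ flip0Set m)

/-- The Weyl group for `osp(2m+1|2)`. -/
def WB (m : ℕ) : Subgroup (GLQ m) :=
  Subgroup.closure (permSet m ∪ singleFlipSet m ∪ flip0Set m)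

/-- The block equivalence: the smallest equivalence relation with
`μ ∼ μ+α` for odd roots `α = ±(δ±ε_i)` with `⟨μ+ρ, α⟩ = 0`, and
`μ ∼ w(μ+ρ)−ρ` for `w ∈ W`. -/
def blockRel (m : ℕ) (ρ : Fin (m+1) → ℚ) (W : Subgroup (GLQ m)) :
    (Fin (m+1) → ℚ) → (Fin (m+1) → ℚ) → Prop :=
  Relation.EqvGen (fun μ ν =>
    (∃ i : ℕ, 1 ≤ i ∧ i ≤ m ∧ ∃ s t : ℚ, (s = 1 ∨ s = -1) ∧ (t = 1 ∨ t = -1) ∧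
      form m (μ + ρ) (t • (eps m 0 + s • eps m i)) = 0 ∧
      ν = μ + t • (eps m 0 + s • eps m i)) ∨
    (∃ w ∈ W, ν = w (μ + ρ) - ρ))

def blockD (m : ℕ) : (Fin (m+1) → ℚ) → (Fin (m+1) → ℚ) → Prop :=
  blockRel m (rhoD m) (WD m)

def blockB (m : ℕ) : (Fin (m+1) → ℚ) → (Fin (m+1) → ℚ) → Prop :=
  blockRel m (rhoB m) (WB m)

/-- The set `𝒫_λ = 𝒫_{λ+} ∪ 𝒫_{λ−}` for `osp(2m|2)`. -/
noncomputable def PlamD (m : ℕ) (l : Fin (m+1) → ℚ) : Set (Fin (m+1) → ℚ) :=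
  {μ | PD m μ ∧
    (μ = l + eps m 0 ∨ μ = l - eps m 0 ∨
     (∃ i : ℕ, 1 ≤ i ∧ i ≤ m - 1 ∧ (μ = l + eps m i ∨ μ = l - eps m i)) ∨
     (0 ≤ l (m : Fin (m+1)) ∧ μ = l + eps m m) ∨
     (l (m : Fin (m+1)) ≤ 0 ∧ μ = l - eps m m) ∨
     (l (m : Fin (m+1)) < 0 ∧ μ = l + eps m m) ∨
     (0 < l (m : Fin (m+1)) ∧ μ = l - eps m m))}

/-- The set `𝒫_λ = 𝒫_{λ+} ∪ 𝒫_{λ−}` for `osp(2m+1|2)`. -/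
noncomputable def PlamB (m : ℕ) (l : Fin (m+1) → ℚ) : Set (Fin (m+1) → ℚ) :=
  {μ | PB m μ ∧
    ((∃ i : ℕ, i ≤ m ∧ (μ = l + eps m i ∨ μ = l - eps m i)) ∨
     (l (m : Fin (m+1)) ≠ 0 ∧ μ = l))}

/-- The weight `λ^{j,q}`. -/
noncomputable def lamJQ (m : ℕ) (l : Fin (m+1) → ℚ) (l0 j : ℕ) (q : ℤ) : Fin (m+1) → ℚ :=
  ((j : ℚ) - (q : ℚ)) • eps m 0 + (∑ i ∈ Finset.Icc 1 j, l (i : Fin (m+1)) • eps m i) +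
    (q : ℚ) • eps m (j + 1) +
    ∑ i ∈ Finset.Icc (j+1) l0, (l (i : Fin (m+1)) + 1) • eps m (i+1)

/-- The weight `λ^{j,q}_−`. -/
noncomputable def lamJQm (m : ℕ) (l : Fin (m+1) → ℚ) (l0 j : ℕ) (q : ℤ) : Fin (m+1) → ℚ :=
  ((j : ℚ) - (q : ℚ)) • eps m 0 + (∑ i ∈ Finset.Icc 1 j, l (i : Fin (m+1)) • eps m i) +
    (q : ℚ) • eps m (j + 1) +
    (∑ i ∈ Finset.Icc (j+1) (l0 - 1), (l (i : Fin (m+1)) + 1) • eps m (i+1)) -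
    (l (l0 : Fin (m+1)) + 1) • eps m (l0 + 1)

/-- `λ^δ` for `osp(2m|2)`: coordinate `0` becomes `2m−2−λ₀`. -/
noncomputable def deltaD (m : ℕ) (l : Fin (m+1) → ℚ) : Fin (m+1) → ℚ :=
  fun i => if i = 0 then 2*(m : ℚ) - 2 - l 0 else l i

/-- `λ^δ` for `osp(2m+1|2)`: coordinate `0` becomes `2m−1−λ₀`. -/
noncomputable def deltaB (m : ℕ) (l : Fin (m+1) → ℚ) : Fin (m+1) → ℚ :=
  fun i => if i = 0 then 2*(m : ℚ) - 1 - l 0 else l i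


section Aux

open Finset

variable {m : ℕ}

/-! ### Basic coordinate lemmas -/

lemma castn {i : ℕ} (h : i ≤ m) : ((i : Fin (m+1)) : ℕ) = i := by
  rw [Fin.val_natCast]
  exact Nat.mod_eq_of_lt (by omega)

lemma cast_ne_zero' {i : ℕ} (h1 : 1 ≤ i) (h2 : i ≤ m) : ((i : ℕ) : Fin (m+1)) ≠ 0 := by
  intro h
  have := congrArg Fin.val h
  rw [castn h2] at this
  simp at this
  omega

lemma cast_inj' {i j : ℕ} (hi : i ≤ m) (hj : j ≤ m) :
    ((i : ℕ) : Fin (m+1)) = ((j : ℕ) : Fin (m+1)) ↔ i = j := by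
  constructor
  · intro h
    have := congrArg Fin.val h
    rwa [castn hi, castn hj] at this
  · intro h; rw [h]

lemma rhoB_zero : rhoB m 0 = 1/2 - m := by simp [rhoB]

lemma rhoB_cast {i : ℕ} (h1 : 1 ≤ i) (h2 : i ≤ m) :
    rhoB m ((i : ℕ) : Fin (m+1)) = (m : ℚ) - i + 1/2 := by
  unfold rhoB
  rw [if_neg (cast_ne_zero' h1 h2), castn h2]

lemma eps_apply_fin (j : ℕ) (k : Fin (m+1)) :
    eps m j k = if k = ((j : ℕ) : Fin (m+1)) then 1 else 0 := by
  unfold eps; rw [Pi.single_apply]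

lemma eps_apply {j i : ℕ} (hj : j ≤ m) (hi : i ≤ m) :
    eps m j ((i : ℕ) : Fin (m+1)) = if i = j then 1 else 0 := by
  rw [eps_apply_fin]
  exact if_congr (cast_inj' hi hj) rfl rfl

lemma eps_apply_zero {j : ℕ} (h1 : 1 ≤ j) (hj : j ≤ m) : eps m j 0 = 0 := by
  rw [eps_apply_fin, if_neg]
  exact fun h => cast_ne_zero' h1 hj h.symm

lemma eps_zero_apply_zero : eps m 0 (0 : Fin (m+1)) = 1 := by
  rw [eps_apply_fin]; simp

/-! ### The `a` and `b` coordinates of a shifted weight -/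

noncomputable def aa (m : ℕ) (l : Fin (m+1) → ℚ) : ℚ := l 0 + rhoB m 0

noncomputable def bb (m : ℕ) (l : Fin (m+1) → ℚ) (i : ℕ) : ℚ :=
  l ((i : ℕ) : Fin (m+1)) + rhoB m ((i : ℕ) : Fin (m+1))

lemma pb_lt {η : Fin (m+1) → ℚ} (hη : PB m η) {i j : ℕ} (h1 : 1 ≤ i) (hij : i < j)
    (hj : j ≤ m) : bb m η j < bb m η i := by
  unfold bb
  rw [rhoB_cast h1 (by omega), rhoB_cast (by omega) hj]
  have h := hη.2.2.1 i j h1 (le_of_lt hij) hj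
  have hc : (i : ℚ) < j := by exact_mod_cast hij
  linarith

lemma pb_inj {η : Fin (m+1) → ℚ} (hη : PB m η) {i j : ℕ} (hi1 : 1 ≤ i) (him : i ≤ m)
    (hj1 : 1 ≤ j) (hjm : j ≤ m) (hne : i ≠ j) : bb m η i ≠ bb m η j := by
  rcases lt_or_gt_of_ne hne with h | h
  · exact (pb_lt hη hi1 h hjm).ne'
  · exact (pb_lt hη hj1 h him).ne

lemma pb_pos {η : Fin (m+1) → ℚ} (hη : PB m η) {i : ℕ} (h1 : 1 ≤ i) (h2 : i ≤ m) :
    1/2 ≤ bb m η i := by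
  unfold bb
  rw [rhoB_cast h1 h2]
  have h := hη.2.2.2.1 i h1 h2
  have hc : (i : ℚ) ≤ m := by exact_mod_cast h2
  linarith

/-! ### The invariant -/

noncomputable def J (m : ℕ) (x : Fin (m+1) → ℚ) : ℚ → ℤ := fun q =>
  (∑ i : Fin (m+1), if i ≠ 0 ∧ |x i| = q then (1:ℤ) else 0) - (if |x 0| = q then 1 else 0)

noncomputable def psi (m : ℕ) (μ : Fin (m+1) → ℚ) : ℚ → ℤ := J m (μ + rhoB m)

/-! ### Form evaluation -/

lemma form_eval (x : Fin (m+1) → ℚ) {i : ℕ} (h1 : 1 ≤ i) (h2 : i ≤ m) (s t : ℚ) :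
    form m x (t • (eps m 0 + s • eps m i)) =
      t * (-(x 0) + s * x ((i : ℕ) : Fin (m+1))) := by
  have hI : ((i : ℕ) : Fin (m+1)) ≠ 0 := cast_ne_zero' h1 h2
  have hy : ∀ k : Fin (m+1), (t • (eps m 0 + s • eps m i)) k =
      t * ((if k = 0 then 1 else 0) + s * (if k = ((i : ℕ) : Fin (m+1)) then 1 else 0)) := by
    intro k
    simp only [Pi.smul_apply, Pi.add_apply, smul_eq_mul, eps_apply_fin]
    norm_num
  unfold form
  rw [Finset.sum_eq_single ((i : ℕ) : Fin (m+1))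
    (fun k _ hk => by rw [hy k, if_neg hk]; split_ifs <;> ring)
    (fun h => absurd (Finset.mem_univ _) h)]
  have h0I : ¬((0 : Fin (m+1)) = ((i : ℕ) : Fin (m+1))) := fun h => hI h.symm
  rw [hy 0, hy ((i : ℕ) : Fin (m+1)), if_neg hI, if_neg h0I, if_neg hI]
  norm_num
  ring

/-! ### W-invariance -/

lemma J_W {w : GLQ m} (hw : w ∈ WB m) : ∀ x, J m (w x) = J m x := by
  induction hw using Subgroup.closure_induction with
  | mem g hg =>
    intro x
    funext q
    unfold J
    rcases hg with (⟨σ, hσ0, hv⟩ | ⟨i, hi0, hv⟩) | hv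
    · have hzero : ∀ k, σ k = 0 ↔ k = 0 :=
        fun k => ⟨fun h => σ.injective (h.trans hσ0.symm), fun h => h ▸ hσ0⟩
      rw [hv x]
      congr 1
      · rw [← Equiv.sum_comp σ (fun k => if k ≠ 0 ∧ |x k| = q then (1:ℤ) else 0)]
        apply Finset.sum_congr rfl
        intro k _
        simp only [Function.comp_apply]
        exact if_congr (and_congr_left' (not_congr (hzero k).symm)) rfl rfl
      · rw [Function.comp_apply, hσ0]
    · have habs : ∀ k, |g x k| = |x k| := by
        intro k
        rw [hv]
        split_ifs with h
        · exact abs_neg _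
        · rfl
      simp only [habs]
    · have habs : ∀ k, |g x k| = |x k| := by
        intro k
        rw [hv]
        split_ifs with h
        · exact abs_neg _
        · rfl
      simp only [habs]
  | one => intro x; rfl
  | mul a b _ _ pa pb =>
    intro x
    have : (a * b) x = a (b x) := rfl
    rw [this, pa, pb]
  | inv a _ pa =>
    intro x
    have h2 : a (a⁻¹ x) = x := a.apply_symm_apply x
    have := pa (a⁻¹ x)
    rw [h2] at this
    exact this.symm

/-! ### Invariance under the odd reflections -/

lemma psi_odd {μ : Fin (m+1) → ℚ} {i : ℕ} (h1 : 1 ≤ i) (h2 : i ≤ m) {s t : ℚ}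
    (hs : s = 1 ∨ s = -1) (ht : t = 1 ∨ t = -1)
    (hf : form m (μ + rhoB m) (t • (eps m 0 + s • eps m i)) = 0) :
    psi m (μ + t • (eps m 0 + s • eps m i)) = psi m μ := by
  set x := μ + rhoB m with hx
  rw [form_eval x h1 h2 s t] at hf
  have ht0 : t ≠ 0 := by rcases ht with rfl | rfl <;> norm_num
  have h' : -(x 0) + s * x ((i : ℕ) : Fin (m+1)) = 0 := by
    rcases mul_eq_zero.mp hf with h | h
    · exact absurd h ht0
    · exact h
  have hxI : x ((i : ℕ) : Fin (m+1)) = s * x 0 := by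
    rcases hs with rfl | rfl <;> linarith
  funext q
  unfold psi J
  set I : Fin (m+1) := ((i : ℕ) : Fin (m+1)) with hI
  have hI0 : I ≠ 0 := cast_ne_zero' h1 h2
  have hco : ∀ k : Fin (m+1), k ≠ I →
      (μ + t • (eps m 0 + s • eps m i) + rhoB m) k = if k = 0 then x 0 + t else x k := by
    intro k hk
    have heq : (μ + t • (eps m 0 + s • eps m i) + rhoB m) k
        = x k + t * ((if k = 0 then 1 else 0) + s * (if k = I then 1 else 0)) := by
      simp only [hx, Pi.add_apply, Pi.smul_apply, smul_eq_mul, eps_apply_fin, ← hI,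
        Nat.cast_zero]
      ring
    rw [heq]
    rw [if_neg hk]
    split_ifs with h
    · subst h; ring
    · ring
  have hcoI : (μ + t • (eps m 0 + s • eps m i) + rhoB m) I = s * (x 0 + t) := by
    have heq : (μ + t • (eps m 0 + s • eps m i) + rhoB m) I
        = x I + t * ((if I = 0 then 1 else 0) + s * (if I = I then 1 else 0)) := by
      simp only [hx, Pi.add_apply, Pi.smul_apply, smul_eq_mul, eps_apply_fin, ← hI,
        Nat.cast_zero]
      ring
    rw [heq, if_neg hI0, if_pos rfl, hxI]
    ring
  have habs_s : ∀ z : ℚ, |s * z| = |z| := by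
    intro z; rcases hs with rfl | rfl <;> simp
  rw [← Finset.add_sum_erase _ _ (Finset.mem_univ I),
      ← Finset.add_sum_erase _ _ (Finset.mem_univ I)]
  have e1 : (if I ≠ 0 ∧ |(μ + t • (eps m 0 + s • eps m i) + rhoB m) I| = q then (1:ℤ) else 0)
      = if |x 0 + t| = q then 1 else 0 := by
    rw [hcoI]
    rw [habs_s]
    simp [hI0]
  have e2 : (if I ≠ 0 ∧ |(μ + rhoB m) I| = q then (1:ℤ) else 0)
      = if |x 0| = q then 1 else 0 := by
    have hxI' : (μ + rhoB m) I = x I := rfl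
    rw [hxI', hxI, habs_s]
    simp [hI0]
  have e3 : (if |(μ + t • (eps m 0 + s • eps m i) + rhoB m) 0| = q then (1:ℤ) else 0)
      = if |x 0 + t| = q then 1 else 0 := by
    rw [hco 0 (fun h => hI0 h.symm), if_pos rfl]
  have e4 : ∑ k ∈ Finset.univ.erase I,
        (if k ≠ 0 ∧ |(μ + t • (eps m 0 + s • eps m i) + rhoB m) k| = q then (1:ℤ) else 0)
      = ∑ k ∈ Finset.univ.erase I, (if k ≠ 0 ∧ |(μ + rhoB m) k| = q then (1:ℤ) else 0) := by
    apply Finset.sum_congr rfl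
    intro k hk
    have hkI : k ≠ I := (Finset.mem_erase.mp hk).1
    rcases eq_or_ne k 0 with rfl | hk0
    · simp
    · have heq : (μ + t • (eps m 0 + s • eps m i) + rhoB m) k = x k := by
        rw [hco k hkI, if_neg hk0]
      rw [heq]
  rw [e1, e2, e3, e4]
  ring

/-! ### `psi` is a block invariant -/

lemma psi_block {μ ν : Fin (m+1) → ℚ} (h : blockB m μ ν) : psi m μ = psi m ν := by
  unfold blockB blockRel at h
  induction h with
  | rel x y hxy =>
    rcases hxy with ⟨i, hi1, hi2, s, t, hs, ht, hf, rfl⟩ | ⟨w, hw, rfl⟩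
    · exact (psi_odd hi1 hi2 hs ht hf).symm
    · have hsum : (w (x + rhoB m) - rhoB m) + rhoB m = w (x + rhoB m) := by
        abel
      unfold psi
      rw [hsum, J_W hw]
  | refl x => rfl
  | symm x y _ ih => exact ih.symm
  | trans x y z _ _ ih1 ih2 => exact ih1.trans ih2

end Aux

section Sep

open Finset

variable {m : ℕ} {l : Fin (m+1) → ℚ}

/-! ### Counting helpers -/

lemma sum_ind_eq_one {f : ℕ → ℚ} {q : ℚ} {i₀ : ℕ} (hi₀ : i₀ ∈ Finset.Icc 1 m)
    (hq : f i₀ = q) (huniq : ∀ i ∈ Finset.Icc 1 m, i ≠ i₀ → f i ≠ q) :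
    (∑ i ∈ Finset.Icc 1 m, if f i = q then (1:ℤ) else 0) = 1 := by
  rw [Finset.sum_eq_single i₀ (fun b hb hbne => if_neg (huniq b hb hbne))
    (fun h => absurd hi₀ h)]
  rw [if_pos hq]

lemma sum_ind_eq_zero {f : ℕ → ℚ} {q : ℚ} (h : ∀ i ∈ Finset.Icc 1 m, f i ≠ q) :
    (∑ i ∈ Finset.Icc 1 m, if f i = q then (1:ℤ) else 0) = 0 :=
  Finset.sum_eq_zero fun i hi => if_neg (h i hi)

/-! ### psi formula for dominant weights -/

lemma psi_formula {η : Fin (m+1) → ℚ} (hη : PB m η) (q : ℚ) :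
    psi m η q = (∑ i ∈ Finset.Icc 1 m, if bb m η i = q then (1:ℤ) else 0)
      - (if |aa m η| = q then 1 else 0) := by
  unfold psi J aa
  simp only [Pi.add_apply]
  congr 1
  have h1 : ∑ i : Fin (m+1), (if i ≠ 0 ∧ |η i + rhoB m i| = q then (1:ℤ) else 0)
      = ∑ n ∈ Finset.range (m+1),
          (if ((n : ℕ) : Fin (m+1)) ≠ 0 ∧ |η ((n : ℕ) : Fin (m+1)) + rhoB m ((n : ℕ) : Fin (m+1))| = q
            then (1:ℤ) else 0) := by
    rw [← Fin.sum_univ_eq_sum_range]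
    apply Finset.sum_congr rfl
    intro i _
    rw [Fin.cast_val_eq_self]
  rw [h1]
  have h2 : Finset.range (m+1) = insert 0 (Finset.Icc 1 m) := by
    ext n; simp; omega
  rw [h2, Finset.sum_insert (by simp)]
  have h0 : ((0 : ℕ) : Fin (m+1)) = 0 := by norm_num
  rw [h0]
  simp only [ne_eq, not_true_eq_false, false_and, if_false, zero_add]
  apply Finset.sum_congr rfl
  intro n hn
  obtain ⟨hn1, hn2⟩ := Finset.mem_Icc.mp hn
  have hne : ((n : ℕ) : Fin (m+1)) ≠ 0 := cast_ne_zero' hn1 hn2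
  have hpos : (0:ℚ) ≤ η ((n : ℕ) : Fin (m+1)) + rhoB m ((n : ℕ) : Fin (m+1)) := by
    have := pb_pos hη hn1 hn2
    unfold bb at this
    linarith
  rw [abs_of_nonneg hpos]
  simp [hne, bb]
  exact if_congr Iff.rfl rfl rfl

/-! ### Coordinates of shifted weights -/

lemma bb_shift (e : ℚ) {j : ℕ} (hj : j ≤ m) {i : ℕ} (h1 : 1 ≤ i) (hi : i ≤ m) :
    bb m (l + e • eps m j) i = bb m l i + (if i = j then e else 0) := by
  unfold bb
  simp only [Pi.add_apply, Pi.smul_apply, smul_eq_mul, eps_apply hj hi]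
  split_ifs <;> ring

lemma aa_shift (e : ℚ) {j : ℕ} (h1 : 1 ≤ j) (hj : j ≤ m) :
    aa m (l + e • eps m j) = aa m l := by
  unfold aa
  simp [eps_apply_zero h1 hj]

lemma aa_shift0 (e : ℚ) : aa m (l + e • eps m 0) = aa m l + e := by
  unfold aa
  simp only [Pi.add_apply, Pi.smul_apply, smul_eq_mul, eps_zero_apply_zero]
  ring

lemma bb_shift0 (e : ℚ) {i : ℕ} (h1 : 1 ≤ i) (hi : i ≤ m) :
    bb m (l + e • eps m 0) i = bb m l i := by
  rw [bb_shift e (Nat.zero_le m) h1 hi, if_neg (by omega)]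
  ring

/-! ### Atypicality -/

lemma atyp_idx (hP : PB m l) (hA : Atyp m (rhoB m) l) :
    ∃ i₀, 1 ≤ i₀ ∧ i₀ ≤ m ∧ bb m l i₀ = |aa m l| := by
  obtain ⟨i, h1, h2, s, hs, hf⟩ := hA
  rw [← one_smul ℚ (eps m 0 + s • eps m i), form_eval _ h1 h2 s 1, one_mul] at hf
  refine ⟨i, h1, h2, ?_⟩
  have hpos := pb_pos hP h1 h2
  have e1 : (l + rhoB m) 0 = aa m l := rfl
  have e2 : (l + rhoB m) ((i : ℕ) : Fin (m+1)) = bb m l i := rfl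
  rw [e1, e2] at hf
  rcases hs with rfl | rfl
  · have heq : aa m l = bb m l i := by linarith
    rw [heq, abs_of_pos (by linarith)]
  · have heq : aa m l = -(bb m l i) := by linarith
    rw [heq, abs_neg, abs_of_pos (by linarith)]

lemma aa_ne_zero (hP : PB m l) : aa m l ≠ 0 := by
  obtain ⟨z, hz⟩ := hP.1 0
  unfold aa
  rw [rhoB_zero, hz]
  intro h
  have h2 : (2 * z : ℚ) = 2 * m - 1 := by linarith
  have h3 : ((2 * z : ℤ) : ℚ) = ((2 * (m:ℤ) - 1 : ℤ) : ℚ) := by push_cast; linarith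
  have := Int.cast_injective (α := ℚ) h3
  omega

lemma abs_aa_ge (hm : 1 ≤ m) (hP : PB m l) (hA : Atyp m (rhoB m) l)
    (hne : l ((m : ℕ) : Fin (m+1)) ≠ 0) : 3/2 ≤ |aa m l| := by
  obtain ⟨i₀, hi1, hi2, hb0⟩ := atyp_idx hP hA
  have hlm : 1 ≤ l ((m : ℕ) : Fin (m+1)) := by
    obtain ⟨z, hz⟩ := hP.1 ((m : ℕ) : Fin (m+1))
    have h0 : 0 ≤ l ((m : ℕ) : Fin (m+1)) := hP.2.2.2.1 m hm le_rfl
    rw [hz] at h0 hne ⊢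
    have hz0 : (0:ℤ) ≤ z := by exact_mod_cast h0
    have hz1 : z ≠ 0 := by exact_mod_cast hne
    have : (1:ℤ) ≤ z := by omega
    exact_mod_cast this
  have hbm : 3/2 ≤ bb m l m := by
    unfold bb
    rw [rhoB_cast hm le_rfl]
    linarith
  have : bb m l m ≤ bb m l i₀ := by
    rcases eq_or_lt_of_le hi2 with h | h
    · rw [h]
    · exact le_of_lt (pb_lt hP hi1 h le_rfl)
  linarith

/-! ### Separation lemmas -/

lemma sep_EE (hP : PB m l) {e e' : ℚ} (he : e = 1 ∨ e = -1) (he' : e' = 1 ∨ e' = -1)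
    {j j' : ℕ} (hj1 : 1 ≤ j) (hjm : j ≤ m) (hj1' : 1 ≤ j') (hjm' : j' ≤ m)
    (hPμ : PB m (l + e • eps m j)) (hPν : PB m (l + e' • eps m j'))
    (hne : ¬(e = e' ∧ j = j')) :
    psi m (l + e • eps m j) ≠ psi m (l + e' • eps m j') := by
  intro hpsi
  have he0 : e ≠ 0 := by rcases he with rfl | rfl <;> norm_num
  have he0' : e' ≠ 0 := by rcases he' with rfl | rfl <;> norm_num
  rcases eq_or_ne j j' with rfl | hjj
  · -- same index, different sign
    have hee : e ≠ e' := fun h => hne ⟨h, rfl⟩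
    have hq := congrFun hpsi (bb m l j + e)
    rw [psi_formula hPμ, psi_formula hPν, aa_shift e hj1 hjm, aa_shift e' hj1 hjm] at hq
    have hs1 : (∑ i ∈ Finset.Icc 1 m,
        if bb m (l + e • eps m j) i = bb m l j + e then (1:ℤ) else 0) = 1 := by
      apply sum_ind_eq_one (Finset.mem_Icc.mpr ⟨hj1, hjm⟩)
      · rw [bb_shift e hjm hj1 hjm, if_pos rfl]
      · intro i hi hine
        obtain ⟨hi1, hi2⟩ := Finset.mem_Icc.mp hi
        have : bb m l j + e = bb m (l + e • eps m j) j := by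
          rw [bb_shift e hjm hj1 hjm, if_pos rfl]
        rw [this]
        exact pb_inj hPμ hi1 hi2 hj1 hjm hine
    have hs2 : (∑ i ∈ Finset.Icc 1 m,
        if bb m (l + e' • eps m j) i = bb m l j + e then (1:ℤ) else 0) = 0 := by
      apply sum_ind_eq_zero
      intro i hi
      obtain ⟨hi1, hi2⟩ := Finset.mem_Icc.mp hi
      rw [bb_shift e' hjm hi1 hi2]
      rcases eq_or_ne i j with rfl | hij
      · rw [if_pos rfl]
        intro h
        exact hee (by linarith)
      · rw [if_neg hij, add_zero]
        have h1 : bb m l i = bb m (l + e • eps m j) i := by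
          rw [bb_shift e hjm hi1 hi2, if_neg hij, add_zero]
        have h2 : bb m l j + e = bb m (l + e • eps m j) j := by
          rw [bb_shift e hjm hj1 hjm, if_pos rfl]
        rw [h1, h2]
        exact pb_inj hPμ hi1 hi2 hj1 hjm hij
    rw [hs1, hs2] at hq
    split_ifs at hq <;> omega
  · -- different indices
    have hq := congrFun hpsi (bb m l j)
    rw [psi_formula hPμ, psi_formula hPν, aa_shift e hj1 hjm, aa_shift e' hj1' hjm'] at hq
    have hs1 : (∑ i ∈ Finset.Icc 1 m,
        if bb m (l + e • eps m j) i = bb m l j then (1:ℤ) else 0) = 0 := by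
      apply sum_ind_eq_zero
      intro i hi
      obtain ⟨hi1, hi2⟩ := Finset.mem_Icc.mp hi
      rw [bb_shift e hjm hi1 hi2]
      rcases eq_or_ne i j with rfl | hij
      · rw [if_pos rfl]
        intro h
        exact he0 (by linarith)
      · rw [if_neg hij, add_zero]
        exact pb_inj hP hi1 hi2 hj1 hjm hij
    have hs2 : (∑ i ∈ Finset.Icc 1 m,
        if bb m (l + e' • eps m j') i = bb m l j then (1:ℤ) else 0) = 1 := by
      apply sum_ind_eq_one (Finset.mem_Icc.mpr ⟨hj1, hjm⟩)
      · rw [bb_shift e' hjm' hj1 hjm, if_neg hjj, add_zero]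
      · intro i hi hine
        obtain ⟨hi1, hi2⟩ := Finset.mem_Icc.mp hi
        rw [bb_shift e' hjm' hi1 hi2]
        rcases eq_or_ne i j' with rfl | hij'
        · rw [if_pos rfl]
          intro h
          have hb1 : bb m l i + e' = bb m (l + e' • eps m i) i := by
            rw [bb_shift e' hjm' hj1' hjm', if_pos rfl]
          have hb2 : bb m l j = bb m (l + e' • eps m i) j := by
            rw [bb_shift e' hjm' hj1 hjm, if_neg hjj, add_zero]
          rw [hb1, hb2] at h
          exact pb_inj hPν hj1' hjm' hj1 hjm (fun hh => hjj hh.symm) h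
        · rw [if_neg hij', add_zero]
          exact pb_inj hP hi1 hi2 hj1 hjm hine
    rw [hs1, hs2] at hq
    split_ifs at hq <;> omega

lemma sep_ED (hP : PB m l) (hA : Atyp m (rhoB m) l) {e e' : ℚ}
    (he : e = 1 ∨ e = -1) (he' : e' = 1 ∨ e' = -1)
    {j : ℕ} (hj1 : 1 ≤ j) (hjm : j ≤ m)
    (hPμ : PB m (l + e • eps m j)) (hPν : PB m (l + e' • eps m 0)) :
    psi m (l + e • eps m j) ≠ psi m (l + e' • eps m 0) := by
  intro hpsi
  have he0 : e ≠ 0 := by rcases he with rfl | rfl <;> norm_num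
  obtain ⟨i₀, hi01, hi02, hb0⟩ := atyp_idx hP hA
  have hq := congrFun hpsi (bb m l j + e)
  rw [psi_formula hPμ, psi_formula hPν, aa_shift e hj1 hjm, aa_shift0 e'] at hq
  have key : ∀ i, 1 ≤ i → i ≤ m → bb m l i ≠ bb m l j + e := by
    intro i hi1 hi2
    rcases eq_or_ne i j with rfl | hij
    · intro h; exact he0 (by linarith)
    · have h1 : bb m l i = bb m (l + e • eps m j) i := by
        rw [bb_shift e hjm hi1 hi2, if_neg hij, add_zero]
      have h2 : bb m l j + e = bb m (l + e • eps m j) j := by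
        rw [bb_shift e hjm hj1 hjm, if_pos rfl]
      rw [h1, h2]
      exact pb_inj hPμ hi1 hi2 hj1 hjm hij
  have hs1 : (∑ i ∈ Finset.Icc 1 m,
      if bb m (l + e • eps m j) i = bb m l j + e then (1:ℤ) else 0) = 1 := by
    apply sum_ind_eq_one (Finset.mem_Icc.mpr ⟨hj1, hjm⟩)
    · rw [bb_shift e hjm hj1 hjm, if_pos rfl]
    · intro i hi hine
      obtain ⟨hi1, hi2⟩ := Finset.mem_Icc.mp hi
      have h2 : bb m l j + e = bb m (l + e • eps m j) j := by
        rw [bb_shift e hjm hj1 hjm, if_pos rfl]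
      rw [h2]
      exact pb_inj hPμ hi1 hi2 hj1 hjm hine
  have hs2 : (∑ i ∈ Finset.Icc 1 m,
      if bb m (l + e' • eps m 0) i = bb m l j + e then (1:ℤ) else 0) = 0 := by
    apply sum_ind_eq_zero
    intro i hi
    obtain ⟨hi1, hi2⟩ := Finset.mem_Icc.mp hi
    rw [bb_shift0 e' hi1 hi2]
    exact key i hi1 hi2
  have hind1 : (if |aa m l| = bb m l j + e then (1:ℤ) else 0) = 0 := by
    rw [if_neg]
    rw [← hb0]
    exact key i₀ hi01 hi02
  rw [hs1, hs2, hind1] at hq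
  split_ifs at hq <;> omega

lemma sep_EO (hP : PB m l) {e : ℚ} (he : e = 1 ∨ e = -1)
    {j : ℕ} (hj1 : 1 ≤ j) (hjm : j ≤ m) (hPμ : PB m (l + e • eps m j)) :
    psi m (l + e • eps m j) ≠ psi m l := by
  intro hpsi
  have he0 : e ≠ 0 := by rcases he with rfl | rfl <;> norm_num
  have hq := congrFun hpsi (bb m l j)
  rw [psi_formula hPμ, psi_formula hP, aa_shift e hj1 hjm] at hq
  have hs1 : (∑ i ∈ Finset.Icc 1 m,
      if bb m (l + e • eps m j) i = bb m l j then (1:ℤ) else 0) = 0 := by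
    apply sum_ind_eq_zero
    intro i hi
    obtain ⟨hi1, hi2⟩ := Finset.mem_Icc.mp hi
    rw [bb_shift e hjm hi1 hi2]
    rcases eq_or_ne i j with rfl | hij
    · rw [if_pos rfl]; intro h; exact he0 (by linarith)
    · rw [if_neg hij, add_zero]
      exact pb_inj hP hi1 hi2 hj1 hjm hij
  have hs2 : (∑ i ∈ Finset.Icc 1 m, if bb m l i = bb m l j then (1:ℤ) else 0) = 1 := by
    apply sum_ind_eq_one (Finset.mem_Icc.mpr ⟨hj1, hjm⟩) rfl
    intro i hi hine
    obtain ⟨hi1, hi2⟩ := Finset.mem_Icc.mp hi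
    exact pb_inj hP hi1 hi2 hj1 hjm hine
  rw [hs1, hs2] at hq
  split_ifs at hq <;> omega

lemma sep_DD (hP : PB m l) {e e' : ℚ} (he : e = 1 ∨ e = -1) (he' : e' = 1 ∨ e' = -1)
    (hee : e ≠ e') (hPμ : PB m (l + e • eps m 0)) (hPν : PB m (l + e' • eps m 0)) :
    psi m (l + e • eps m 0) ≠ psi m (l + e' • eps m 0) := by
  intro hpsi
  have hq := congrFun hpsi (|aa m l + e|)
  rw [psi_formula hPμ, psi_formula hPν, aa_shift0 e, aa_shift0 e'] at hq
  have hss : (∑ i ∈ Finset.Icc 1 m,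
        if bb m (l + e • eps m 0) i = |aa m l + e| then (1:ℤ) else 0)
      = (∑ i ∈ Finset.Icc 1 m,
        if bb m (l + e' • eps m 0) i = |aa m l + e| then (1:ℤ) else 0) := by
    apply Finset.sum_congr rfl
    intro i hi
    obtain ⟨hi1, hi2⟩ := Finset.mem_Icc.mp hi
    rw [bb_shift0 e hi1 hi2, bb_shift0 e' hi1 hi2]
  have habs : |aa m l + e'| ≠ |aa m l + e| := by
    intro h
    rcases abs_eq_abs.mp h with h2 | h2
    · exact hee (by linarith)
    · have h3 : e' = -e := by rcases he with rfl | rfl <;> rcases he' with rfl | rfl <;>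
        first | rfl | (exact absurd rfl hee) | norm_num
      rw [h3] at h2
      exact aa_ne_zero hP (by linarith)
  rw [hss, if_pos rfl, if_neg habs] at hq
  omega

lemma sep_DO (hm : 1 ≤ m) (hP : PB m l) (hA : Atyp m (rhoB m) l)
    (hlm : l ((m : ℕ) : Fin (m+1)) ≠ 0)
    {e : ℚ} (he : e = 1 ∨ e = -1) (hPμ : PB m (l + e • eps m 0)) :
    psi m (l + e • eps m 0) ≠ psi m l := by
  intro hpsi
  obtain ⟨i₀, hi01, hi02, hb0⟩ := atyp_idx hP hA
  have hq := congrFun hpsi (|aa m l|)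
  rw [psi_formula hPμ, psi_formula hP, aa_shift0 e] at hq
  have hss : (∑ i ∈ Finset.Icc 1 m,
        if bb m (l + e • eps m 0) i = |aa m l| then (1:ℤ) else 0)
      = (∑ i ∈ Finset.Icc 1 m, if bb m l i = |aa m l| then (1:ℤ) else 0) := by
    apply Finset.sum_congr rfl
    intro i hi
    obtain ⟨hi1, hi2⟩ := Finset.mem_Icc.mp hi
    rw [bb_shift0 e hi1 hi2]
  have h32 := abs_aa_ge hm hP hA hlm
  have habs : |aa m l + e| ≠ |aa m l| := by
    intro h
    rcases abs_eq_abs.mp h with h2 | h2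
    · rcases he with rfl | rfl <;> norm_num at h2
    · have ha : aa m l = -e/2 := by linarith
      have hle : |aa m l| ≤ 1/2 := by
        rw [ha, abs_le]
        constructor <;> rcases he with rfl | rfl <;> norm_num
      linarith
  rw [hss, if_pos rfl, if_neg habs] at hq
  omega

/-! ### Description of PlamB elements -/

lemma plam_desc {μ : Fin (m+1) → ℚ} (hμ : μ ∈ PlamB m l) : PB m μ ∧
    ((∃ e j, (e = (1:ℚ) ∨ e = -1) ∧ 1 ≤ j ∧ j ≤ m ∧ μ = l + e • eps m j) ∨
     (∃ e : ℚ, (e = 1 ∨ e = -1) ∧ μ = l + e • eps m 0) ∨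
     (l ((m : ℕ) : Fin (m+1)) ≠ 0 ∧ μ = l)) := by
  obtain ⟨hPμ, h⟩ := hμ
  refine ⟨hPμ, ?_⟩
  rcases h with ⟨i, him, h | h⟩ | ⟨hlm, h⟩
  · rcases Nat.eq_zero_or_pos i with rfl | hi
    · exact Or.inr (Or.inl ⟨1, Or.inl rfl, by rw [one_smul]; exact h⟩)
    · exact Or.inl ⟨1, i, Or.inl rfl, hi, him, by rw [one_smul]; exact h⟩
  · rw [sub_eq_add_neg, ← neg_one_smul ℚ (eps m i)] at h
    rcases Nat.eq_zero_or_pos i with rfl | hi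
    · exact Or.inr (Or.inl ⟨-1, Or.inr rfl, h⟩)
    · exact Or.inl ⟨-1, i, Or.inr rfl, hi, him, h⟩
  · exact Or.inr (Or.inr ⟨hlm, h⟩)

end Sep

/-- Lemma 4.4(2) for `osp(2m+1|2)`: for atypical `λ ∈ 𝒫` and distinct
`μ, ν ∈ 𝒫_λ`, `μ` and `ν` are not block equivalent. -/
theorem block_in_Plam_B (m : ℕ) (hm : 1 ≤ m) (l : Fin (m+1) → ℚ)
    (hP : PB m l) (hA : Atyp m (rhoB m) l)
    (μ ν : Fin (m+1) → ℚ) (hμ : μ ∈ PlamB m l) (hν : ν ∈ PlamB m l) (hne : μ ≠ ν) :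
    ¬ blockB m μ ν := by
  intro hblock
  have hpsi : psi m μ = psi m ν := psi_block hblock
  obtain ⟨hPμ, hdμ⟩ := plam_desc hμ
  obtain ⟨hPν, hdν⟩ := plam_desc hν
  rcases hdμ with ⟨e, j, he, hj1, hjm, rfl⟩ | ⟨e, he, rfl⟩ | ⟨hlm, rfl⟩ <;>
    rcases hdν with ⟨e', j', he', hj1', hjm', rfl⟩ | ⟨e', he', rfl⟩ | ⟨hlm', rfl⟩
  · refine sep_EE hP he he' hj1 hjm hj1' hjm' hPμ hPν (fun ⟨h1, h2⟩ => hne ?_) hpsi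
    rw [h1, h2]
  · exact sep_ED hP hA he he' hj1 hjm hPμ hPν hpsi
  · exact sep_EO hP he hj1 hjm hPμ hpsi
  · exact (sep_ED hP hA he' he hj1' hjm' hPν hPμ) hpsi.symm
  · refine sep_DD hP he he' (fun h => hne ?_) hPμ hPν hpsi
    rw [h]
  · exact sep_DO hm hP hA hlm' he hPμ hpsi
  · exact (sep_EO hP he' hj1' hjm' hPν) hpsi.symm
  · exact (sep_DO hm hP hA hlm he' hPν) hpsi.symm
  · exact hne rfl
end

section
/- For osp(2m|2): let λ ∈ 𝒫 with λ₀ ≥ m and let k be the largest index 1 ≤ k ≤ m with λ_k ≠ 0 (k = 0 if λ_i = 0 for all 1 ≤ i ≤ m). Then λ^δ ∈ 𝒫 if and only if λ₀ ≤ 2m−2−k. -/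
open Finset
open Fin.NatCast

lemma natCast_fin_ne_zero (m i : ℕ) (h1 : 1 ≤ i) (h2 : i ≤ m) : (i : Fin (m+1)) ≠ 0 := by
  have : (i : Fin (m+1)).val = i := by
    rw [Fin.val_natCast]; exact Nat.mod_eq_of_lt (by omega)
  intro h
  rw [h] at this
  simp at this
  omega

lemma deltaD_eq (m : ℕ) (l : Fin (m+1) → ℚ) (i : ℕ) (h1 : 1 ≤ i) (h2 : i ≤ m) :
    deltaD m l (i : Fin (m+1)) = l (i : Fin (m+1)) := by
  unfold deltaD
  rw [if_neg (natCast_fin_ne_zero m i h1 h2)]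

/-- For `osp(2m|2)`: for `λ ∈ 𝒫` with `λ₀ ≥ m` and `k` the largest index with
`λ_k ≠ 0` (`k = 0` if none), `λ^δ ∈ 𝒫` iff `λ₀ ≤ 2m−2−k`. -/
theorem deltaflip_dominant_iff_D (m : ℕ) (hm : 2 ≤ m) (l : Fin (m+1) → ℚ)
    (hP : PD m l) (h0 : (m : ℚ) ≤ l 0)
    (k : ℕ) (hkm : k ≤ m)
    (hk : k = 0 ∨ (1 ≤ k ∧ l (k : Fin (m+1)) ≠ 0))
    (hkmax : ∀ i : ℕ, k < i → i ≤ m → l (i : Fin (m+1)) = 0) :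
    PD m (deltaD m l) ↔ l 0 ≤ 2*(m : ℚ) - 2 - k := by
  obtain ⟨hint, h0n, hmono, habs, hnn, hzero⟩ := hP
  have hd0 : deltaD m l 0 = 2*(m : ℚ) - 2 - l 0 := by simp [deltaD]
  constructor
  · rintro ⟨hint', h0n', _, _, _, hzero'⟩
    rcases hk with hk0 | ⟨hk1, hkne⟩
    · rw [hd0] at h0n'
      subst hk0
      push_cast
      linarith
    · by_contra hcon
      push_neg at hcon
      have := hzero' k hk1 hkm (by rw [hd0]; linarith)
      rw [deltaD_eq m l k hk1 hkm] at this
      exact hkne this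
  · intro h
    have hk0 : (0:ℚ) ≤ (k:ℚ) := Nat.cast_nonneg k
    refine ⟨?_, ?_, ?_, ?_, ?_, ?_⟩
    · intro i
      by_cases hi : i = 0
      · obtain ⟨z, hz⟩ := hint 0
        exact ⟨2*(m:ℤ) - 2 - z, by subst hi; rw [hd0, hz]; push_cast; ring⟩
      · obtain ⟨z, hz⟩ := hint i
        exact ⟨z, by unfold deltaD; rw [if_neg hi]; exact hz⟩
    · rw [hd0]; linarith
    · intro i j hi hij hjm
      rw [deltaD_eq m l i hi (by omega), deltaD_eq m l j (by omega) (by omega)]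
      exact hmono i j hi hij hjm
    · rw [deltaD_eq m l m (by omega) le_rfl, deltaD_eq m l (m-1) (by omega) (by omega)]
      exact habs
    · intro i hi him
      rw [deltaD_eq m l i hi (by omega)]
      exact hnn i hi him
    · intro i hi him hlt
      rw [hd0] at hlt
      rw [deltaD_eq m l i hi him]
      refine hkmax i ?_ him
      have : (k:ℚ) < (i:ℚ) := by linarith
      exact_mod_cast this
end

section
/- For osp(2m|2): let λ ∈ 𝒫 with λ₀ ≥ m and λ^δ ∈ 𝒫 (equivalently m ≤ λ₀ ≤ 2m−2−k, where k is the largest index with λ_k ≠ 0). Then 1 ≤ 2m−1−λ₀ ≤ m−1, λ_{2m−1−λ₀} = 0, and ⟨λ+ρ, δ+ε_{2m−1−λ₀}⟩ = 0; in particular λ is atypical. -/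
open Finset
open Fin.NatCast

lemma form_delta_eps (m : ℕ) (μ : Fin (m+1) → ℚ) (i : ℕ) (hi : (i : Fin (m+1)) ≠ 0) :
    form m μ (eps m 0 + eps m i) = -(μ 0) + μ i := by
  have key : ∀ j : Fin (m+1), (if j = 0 then 0 else μ j * (eps m 0 + eps m i) j)
      = if j = (i : Fin (m+1)) then μ j else 0 := by
    intro j
    simp only [eps, Pi.add_apply, Pi.single_apply, Nat.cast_zero]
    by_cases h : j = 0 <;> by_cases h' : j = (i : Fin (m+1)) <;> simp_all
  have h0 : (eps m 0 + eps m i) 0 = 1 := by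
    have : ¬((0 : Fin (m+1)) = (i : Fin (m+1))) := fun h => hi h.symm
    simp [eps, Pi.single_apply, this]
  simp only [form, key, Finset.sum_ite_eq' Finset.univ, Finset.mem_univ, if_true, h0]
  ring

/-- For `osp(2m|2)`: if `λ ∈ 𝒫` with `λ₀ ≥ m` and `λ^δ ∈ 𝒫`, then
`1 ≤ 2m−1−λ₀ ≤ m−1`, `λ_{2m−1−λ₀} = 0` and `⟨λ+ρ, δ+ε_{2m−1−λ₀}⟩ = 0`;
in particular `λ` is atypical. -/
theorem high_level_atypical_D (m : ℕ) (hm : 2 ≤ m) (l : Fin (m+1) → ℚ) (hP : PD m l)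
    (l0 : ℕ) (hl0 : (l0 : ℚ) = l 0) (h0 : (m : ℚ) ≤ l 0) (hδ : PD m (deltaD m l)) :
    1 ≤ 2*m - 1 - l0 ∧ 2*m - 1 - l0 ≤ m - 1 ∧
    l ((2*m - 1 - l0 : ℕ) : Fin (m+1)) = 0 ∧
    form m (l + rhoD m) (eps m 0 + eps m (2*m - 1 - l0)) = 0 ∧
    Atyp m (rhoD m) l := by
  have hml0 : m ≤ l0 := by exact_mod_cast hl0 ▸ h0
  have hup : (l0 : ℚ) ≤ 2*m - 2 := by
    have h1 := hδ.2.1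
    simp only [deltaD, if_pos rfl, if_true] at h1
    linarith [hl0 ▸ h1]
  have hupn : l0 ≤ 2*m - 2 := by
    have : (l0 : ℚ) ≤ ((2*m - 2 : ℕ) : ℚ) := by
      rw [Nat.cast_sub (by omega)]; push_cast; linarith
    exact_mod_cast this
  set i : ℕ := 2*m - 1 - l0 with hi
  have hi1 : 1 ≤ i := by omega
  have him : i ≤ m - 1 := by omega
  have hicast : (i : ℚ) = 2*m - 1 - (l0 : ℚ) := by
    rw [hi, Nat.cast_sub (by omega), Nat.cast_sub (by omega)]; push_cast; ring
  have hival : ((i : Fin (m+1)) : ℕ) = i := Fin.val_cast_of_lt (by omega)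
  have hine : (i : Fin (m+1)) ≠ 0 := by
    intro h
    have := congrArg Fin.val h
    rw [hival] at this
    simp at this; omega
  have hlz : l ((i : ℕ) : Fin (m+1)) = 0 := by
    have h := hδ.2.2.2.2.2 i hi1 (by omega) ?_
    · simpa only [deltaD, if_neg hine] using h
    · show deltaD m l 0 < (i : ℚ)
      simp only [deltaD, if_pos rfl, if_true]
      rw [hicast, ← hl0]; linarith
  have hform : form m (l + rhoD m) (eps m 0 + eps m i) = 0 := by
    have hr0 : rhoD m 0 = 1 - (m : ℚ) := by simp [rhoD]
    have hri : rhoD m ((i : ℕ) : Fin (m+1)) = (m : ℚ) - (i : ℚ) := by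
      simp only [rhoD, if_neg hine, hival]
    rw [form_delta_eps m _ i hine]
    simp only [Pi.add_apply]
    rw [hr0, hri, hlz, ← hl0, hicast]; ring
  refine ⟨hi1, him, hlz, hform, ⟨i, hi1, by omega, 1, Or.inl rfl, by simpa using hform⟩⟩
end

section
/- For osp(2m+1|2): let λ ∈ 𝒫 with λ₀ ≥ m and λ^δ ∈ 𝒫 (equivalently m ≤ λ₀ ≤ 2m−1−k, where k is the largest index with λ_k ≠ 0). Then 1 ≤ 2m−λ₀ ≤ m, λ_{2m−λ₀} = 0, and ⟨λ+ρ, δ+ε_{2m−λ₀}⟩ = 0; in particular λ is atypical. -/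
open Finset
open Fin.NatCast

/-- For `osp(2m+1|2)`: if `λ ∈ 𝒫` with `λ₀ ≥ m` and `λ^δ ∈ 𝒫`, then
`1 ≤ 2m−λ₀ ≤ m`, `λ_{2m−λ₀} = 0` and `⟨λ+ρ, δ+ε_{2m−λ₀}⟩ = 0`;
in particular `λ` is atypical. -/
theorem high_level_atypical_B (m : ℕ) (hm : 1 ≤ m) (l : Fin (m+1) → ℚ) (hP : PB m l)
    (l0 : ℕ) (hl0 : (l0 : ℚ) = l 0) (h0 : (m : ℚ) ≤ l 0) (hδ : PB m (deltaB m l)) :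
    1 ≤ 2*m - l0 ∧ 2*m - l0 ≤ m ∧
    l ((2*m - l0 : ℕ) : Fin (m+1)) = 0 ∧
    form m (l + rhoB m) (eps m 0 + eps m (2*m - l0)) = 0 ∧
    Atyp m (rhoB m) l := by
  obtain ⟨hInt, h0le, hmono, hnn, hzero⟩ := hP
  obtain ⟨_, hδ0, _, _, hδzero⟩ := hδ
  have hl0ge : m ≤ l0 := by
    have : (m : ℚ) ≤ (l0 : ℚ) := by rw [hl0]; exact h0
    exact_mod_cast this
  have hδ0' : (0:ℚ) ≤ 2*(m:ℚ) - 1 - l 0 := by simpa [deltaB] using hδ0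
  have hl0le : l0 ≤ 2*m - 1 := by
    have : (l0 : ℚ) ≤ 2*(m:ℚ) - 1 := by rw [hl0]; linarith
    have h2 : (l0 : ℚ) ≤ ((2*m - 1 : ℕ) : ℚ) := by
      push_cast [Nat.cast_sub (by omega : 1 ≤ 2*m)]; linarith
    exact_mod_cast h2
  set k := 2*m - l0 with hk
  have hk1 : 1 ≤ k := by omega
  have hkm : k ≤ m := by omega
  have hkval : ((k : Fin (m+1)) : ℕ) = k := Fin.val_cast_of_lt (by omega)
  have hkne : (k : Fin (m+1)) ≠ 0 := by
    intro h
    have := congrArg Fin.val h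
    rw [hkval] at this
    simp at this
    omega
  have hkQ : ((k : ℕ) : ℚ) = 2*(m:ℚ) - (l0:ℚ) := by
    rw [hk]; push_cast [Nat.cast_sub (by omega : l0 ≤ 2*m)]; ring
  have hlk : l ((k : ℕ) : Fin (m+1)) = 0 := by
    have hlt : deltaB m l 0 < (k : ℚ) := by
      have : deltaB m l 0 = 2*(m:ℚ) - 1 - l 0 := by simp [deltaB]
      rw [this, hkQ, ← hl0]; linarith
    have := hδzero k hk1 hkm hlt
    simpa [deltaB, hkne] using this
  have e0 : (eps m 0 + eps m k) 0 = 1 := by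
    simp [eps, Pi.single_apply, Ne.symm hkne]
  have ekk : (eps m 0 + eps m k) ((k : ℕ) : Fin (m+1)) = 1 := by
    simp [eps, Pi.single_apply, hkne]
  have rho0 : rhoB m 0 = 1/2 - (m : ℚ) := by simp [rhoB]
  have rhok : rhoB m ((k : ℕ) : Fin (m+1)) = (m : ℚ) - (k : ℚ) + 1/2 := by
    simp only [rhoB, if_neg hkne, hkval]
  have hform : form m (l + rhoB m) (eps m 0 + eps m k) = 0 := by
    unfold form
    rw [Finset.sum_eq_single ((k : ℕ) : Fin (m+1))]
    · simp only [Pi.add_apply, if_neg hkne, e0, ekk, rho0, rhok, hlk]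
      rw [← hl0, hkQ]
      ring
    · intro i _ hi
      rcases eq_or_ne i 0 with h | h
      · simp [h]
      · simp [h, eps, Pi.single_apply, hi]
    · intro h
      exact absurd (Finset.mem_univ _) h
  refine ⟨hk1, hkm, hlk, hform, k, hk1, hkm, 1, Or.inl rfl, ?_⟩
  simpa using hform
end

section
/- (Lemma 2.4, osp(2m|2)) For every λ ∈ 𝒫 with λ₀ ≥ m, the following identity holds in K: chM(λ) − chM(λ^δ) = (∏_{α∈Δ₁⁺}(e^{α/2} + e^{−α/2}) / ∏_{α∈Δ₀⁺}(e^{α/2} − e^{−α/2})) · Σ_{w∈W} det(w) e^{w(λ+ρ)}, where λ^δ = (2m−2−λ₀)δ + Σ_{i=1}^m λ_i ε_i. -/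
open Finset
open Fin.NatCast

/-- The group algebra `A = ℤ[Γ]` (with `Γ ⊆ ℚ^{1+m}` the weight lattice). -/
abbrev Am (m : ℕ) : Type := AddMonoidAlgebra ℤ (Fin (m+1) → ℚ)

noncomputable instance (m : ℕ) : IsDomain (Am m) := NoZeroDivisors.to_isDomain _

/-- The fraction field `K` of `A`. -/
abbrev Km (m : ℕ) : Type := FractionRing (Am m)

/-- The element `e^μ ∈ K`. -/
noncomputable def ee (m : ℕ) (μ : Fin (m+1) → ℚ) : Km m :=
  algebraMap (Am m) (Km m) (AddMonoidAlgebra.single μ 1)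

/-- The Weyl group `W_o` of `o(2m)` (fixing coordinate 0). -/
def WoD (m : ℕ) : Subgroup (GLQ m) := Subgroup.closure (permSet m ∪ doubleFlipSet m)

/-- `ρ_o` for `o(2m)`. -/
noncomputable def rhooD (m : ℕ) : Fin (m+1) → ℚ :=
  fun i => if i = 0 then 0 else (m : ℚ) - (i : ℕ)

/-- The Weyl character `chL(μ)` of the irreducible `o(2m)`-module with highest
weight `μ`, as an element of `K`. -/
noncomputable def chLD (m : ℕ) (μ : Fin (m+1) → ℚ) : Km m :=
  (∑ᶠ w ∈ (WoD m : Set (GLQ m)),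
      ((LinearMap.det (LinearEquiv.toLinearMap w) : ℚ) : Km m) *
        ee m (w (μ + rhooD m) - rhooD m)) /
  ∏ p ∈ Finset.filter (fun p : ℕ × ℕ => p.1 < p.2) (Finset.Icc 1 m ×ˢ Finset.Icc 1 m),
    ((1 - ee m (-(eps m p.1 - eps m p.2))) * (1 - ee m (-(eps m p.1 + eps m p.2))))

/-- The character `chM(ν)` of the generalized Verma module for `osp(2m|2)`. -/
noncomputable def chMD (m : ℕ) (ν : Fin (m+1) → ℚ) : Km m :=
  ((∏ i ∈ Finset.Icc 1 m,
      ((1 + ee m (-(eps m 0 - eps m i))) * (1 + ee m (-(eps m 0 + eps m i))))) /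
    (1 - ee m (-((2 : ℚ) • eps m 0)))) *
  ee m (ν 0 • eps m 0) * chLD m (ν - ν 0 • eps m 0)


/-! ### Auxiliary lemmas -/

section Aux

open Finset

lemma ee_add (m : ℕ) (a b : Fin (m+1) → ℚ) : ee m (a + b) = ee m a * ee m b := by
  unfold ee
  rw [← map_mul]
  congr 1
  rw [AddMonoidAlgebra.single_mul_single, one_mul]

lemma ee_zero (m : ℕ) : ee m 0 = 1 := by
  unfold ee
  rw [← AddMonoidAlgebra.one_def, map_one]

lemma ee_ne_zero (m : ℕ) (a : Fin (m+1) → ℚ) : ee m a ≠ 0 := by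
  intro h
  have h2 : AddMonoidAlgebra.single (R := ℤ) a 1 = 0 :=
    IsFractionRing.injective (Am m) (Km m) (by rw [map_zero]; exact h)
  have := congrArg (fun f : Am m => f.coeff a) h2
  simp [AddMonoidAlgebra.coeff_single] at this

lemma ee_mul_ee_neg (m : ℕ) (a : Fin (m+1) → ℚ) : ee m a * ee m (-a) = 1 := by
  rw [← ee_add, add_neg_cancel, ee_zero]

lemma one_sub_ee_ne_zero (m : ℕ) {a : Fin (m+1) → ℚ} (ha : a ≠ 0) :
    (1 : Km m) - ee m a ≠ 0 := by
  intro h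
  have h2 : (1 : Am m) - AddMonoidAlgebra.single a 1 = 0 := by
    apply IsFractionRing.injective (Am m) (Km m)
    rw [map_zero, map_sub, map_one]
    exact h
  rw [sub_eq_zero] at h2
  have := congrArg (fun f : Am m => f.coeff 0) h2
  simp [AddMonoidAlgebra.coeff_single, AddMonoidAlgebra.one_def, Finsupp.single_apply, ha] at this

lemma ee_pow (m : ℕ) (a : Fin (m+1) → ℚ) (n : ℕ) : ee m a ^ n = ee m ((n : ℚ) • a) := by
  induction n with
  | zero => simp [ee_zero]
  | succ k ih =>
    rw [pow_succ, ih, ← ee_add]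
    congr 1
    push_cast
    module


/-- The diagonal matrix of the sign change of coordinate 0. -/
noncomputable def sgnD (m : ℕ) : Matrix (Fin (m+1)) (Fin (m+1)) ℚ :=
  Matrix.diagonal (fun k => if k = 0 then (-1 : ℚ) else 1)

lemma sgnD_mul_self (m : ℕ) : sgnD m * sgnD m = 1 := by
  rw [sgnD, Matrix.diagonal_mul_diagonal]
  ext i j
  rcases eq_or_ne i j with rfl | hij
  · rw [Matrix.diagonal_apply_eq, Matrix.one_apply_eq]
    split <;> norm_num
  · rw [Matrix.diagonal_apply_ne _ hij, Matrix.one_apply_ne hij]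

lemma sgnD_comp (m : ℕ) :
    (Matrix.toLin' (sgnD m)).comp (Matrix.toLin' (sgnD m)) = LinearMap.id := by
  rw [← Matrix.toLin'_mul, sgnD_mul_self, Matrix.toLin'_one]

/-- The sign change of coordinate `0` as a linear equivalence. -/
noncomputable def sigma0 (m : ℕ) : GLQ m :=
  LinearEquiv.ofLinear (Matrix.toLin' (sgnD m)) (Matrix.toLin' (sgnD m))
    (sgnD_comp m) (sgnD_comp m)

lemma sigma0_apply (m : ℕ) (v : Fin (m+1) → ℚ) (k : Fin (m+1)) :
    sigma0 m v k = if k = 0 then -(v k) else v k := by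
  show Matrix.toLin' (sgnD m) v k = _
  rw [Matrix.toLin'_apply, sgnD, Matrix.mulVec_diagonal]
  split <;> ring

lemma sigma0_mem_flip0 (m : ℕ) : sigma0 m ∈ flip0Set m := fun v k => sigma0_apply m v k

lemma flip0_eq_sigma0 (m : ℕ) {w : GLQ m} (hw : w ∈ flip0Set m) : w = sigma0 m := by
  apply LinearEquiv.toLinearMap_injective
  apply LinearMap.ext
  intro v
  funext k
  rw [show (w.toLinearMap) v = w v from rfl, hw v k]
  exact (sigma0_apply m v k).symm

lemma det_sigma0 (m : ℕ) : LinearMap.det (sigma0 m).toLinearMap = -1 := by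
  show LinearMap.det (Matrix.toLin' (sgnD m)) = -1
  rw [LinearMap.det_toLin', sgnD, Matrix.det_diagonal]
  rw [Finset.prod_eq_single (0 : Fin (m+1)) (fun b _ hb => if_neg hb)
    (fun h => absurd (Finset.mem_univ _) h)]
  simp

lemma sigma0_sq (m : ℕ) : sigma0 m * sigma0 m = 1 := by
  apply LinearEquiv.toLinearMap_injective
  apply LinearMap.ext
  intro v
  funext k
  show sigma0 m (sigma0 m v) k = v k
  rw [sigma0_apply, sigma0_apply]
  split <;> simp

lemma sigma0_inv (m : ℕ) : (sigma0 m)⁻¹ = sigma0 m :=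
  inv_eq_of_mul_eq_one_right (sigma0_sq m)


/-- The subgroup of `GLQ m` fixing the `0`-coordinate structure. -/
def Hfix (m : ℕ) : Subgroup (GLQ m) where
  carrier := {w | (∀ v, w v 0 = v 0) ∧ w (Pi.single 0 1) = Pi.single 0 1}
  one_mem' := ⟨fun _ => rfl, rfl⟩
  mul_mem' := by
    rintro a b ⟨ha1, ha2⟩ ⟨hb1, hb2⟩
    refine ⟨fun v => ?_, ?_⟩
    · show a (b v) 0 = v 0
      rw [ha1 (b v), hb1 v]
    · show a (b (Pi.single 0 1)) = Pi.single 0 1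
      rw [hb2, ha2]
  inv_mem' := by
    rintro a ⟨ha1, ha2⟩
    have key : ∀ v, a (a⁻¹ v) = v := fun v =>
      congrArg (fun e : GLQ m => e v) (mul_inv_cancel a)
    refine ⟨fun v => ?_, ?_⟩
    · conv_rhs => rw [← key v]
      exact (ha1 (a⁻¹ v)).symm
    · apply a.injective
      rw [key, ha2]

lemma sigma0_not_mem_Hfix (m : ℕ) : sigma0 m ∉ Hfix m := by
  rintro ⟨-, h2⟩
  have := congrFun h2 0
  rw [sigma0_apply] at this
  norm_num at this

lemma sigma0_comm (m : ℕ) {w : GLQ m} (hw : w ∈ Hfix m) :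
    sigma0 m * w = w * sigma0 m := by
  apply LinearEquiv.toLinearMap_injective
  apply LinearMap.ext
  intro v
  funext k
  show sigma0 m (w v) k = w (sigma0 m v) k
  have hv : sigma0 m v = v + (-2 * v 0) • (Pi.single 0 1 : Fin (m+1) → ℚ) := by
    funext j
    rw [sigma0_apply]
    rcases eq_or_ne j 0 with rfl | hj
    · simp only [if_true, eq_self_iff_true, if_pos, Pi.add_apply, Pi.smul_apply,
        Pi.single_eq_same, smul_eq_mul, ite_true]
      ring
    · simp [if_neg hj, Pi.single_eq_of_ne hj]
  rw [hv, map_add, map_smul, hw.2, sigma0_apply]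
  rcases eq_or_ne k 0 with rfl | hk
  · simp only [if_true, eq_self_iff_true, if_pos, Pi.add_apply, Pi.smul_apply,
      Pi.single_eq_same, smul_eq_mul, hw.1 v, ite_true]
    ring
  · simp [if_neg hk, Pi.single_eq_of_ne hk]

/-- The subgroup of signed permutation ("monomial") transformations. -/
def Mono (m : ℕ) : Subgroup (GLQ m) where
  carrier := {w | ∃ p : Equiv.Perm (Fin (m+1)) × (Fin (m+1) → ℚ),
    (∀ k, p.2 k = 1 ∨ p.2 k = -1) ∧ ∀ v k, w v k = p.2 k * v (p.1 k)}
  one_mem' := ⟨⟨1, fun _ => 1⟩, fun _ => Or.inl rfl, fun _ _ => (one_mul _).symm⟩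
  mul_mem' := by
    rintro a b ⟨⟨σa, sa⟩, hsa, ha⟩ ⟨⟨σb, sb⟩, hsb, hb⟩
    dsimp only at hsa ha hsb hb
    refine ⟨⟨σa.trans σb, fun k => sa k * sb (σa k)⟩, fun k => ?_, fun v k => ?_⟩
    all_goals dsimp only
    · rcases hsa k with h | h <;> rcases hsb (σa k) with h' | h' <;> rw [h, h'] <;> norm_num
    · show a (b v) k = _
      rw [ha (b v) k, hb v (σa k), ← mul_assoc]
      rfl
  inv_mem' := by
    rintro a ⟨⟨σ, s⟩, hs, ha⟩
    dsimp only at hs ha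
    refine ⟨⟨σ.symm, fun k => s (σ.symm k)⟩, fun k => hs _, fun v k => ?_⟩
    dsimp only
    have key : a (a⁻¹ v) = v := congrArg (fun e : GLQ m => e v) (mul_inv_cancel a)
    have h2 : v (σ.symm k) = s (σ.symm k) * (a⁻¹ v) k := by
      conv_lhs => rw [← key]
      rw [ha (a⁻¹ v) (σ.symm k), Equiv.apply_symm_apply]
    rw [h2, ← mul_assoc]
    rcases hs (σ.symm k) with h | h <;> rw [h] <;> ring

lemma WoD_le_Hfix (m : ℕ) : WoD m ≤ Hfix m := by
  rw [WoD, Subgroup.closure_le]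
  rintro w (⟨σ, hσ0, hw⟩ | ⟨i, j, hi, hj, hij, hw⟩)
  · refine ⟨fun v => ?_, ?_⟩
    · rw [hw v]
      show v (σ 0) = v 0
      rw [hσ0]
    · rw [hw]
      funext k
      simp only [Function.comp_apply]
      rcases eq_or_ne k 0 with rfl | hk
      · rw [hσ0]
      · rw [Pi.single_eq_of_ne hk, Pi.single_eq_of_ne
          (fun h => hk (σ.injective (h.trans hσ0.symm)))]
  · refine ⟨fun v => ?_, ?_⟩
    · rw [hw v 0, if_neg]
      rintro (rfl | rfl)
      · exact hi rfl
      · exact hj rfl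
    · funext k
      rw [hw]
      split_ifs with h
      · have hk : k ≠ 0 := by
          rintro rfl
          rcases h with rfl | rfl
          · exact hi rfl
          · exact hj rfl
        simp [Pi.single_eq_of_ne hk]
      · rfl

lemma WoD_le_Mono (m : ℕ) : WoD m ≤ Mono m := by
  rw [WoD, Subgroup.closure_le]
  rintro w (⟨σ, hσ0, hw⟩ | ⟨i, j, hi, hj, hij, hw⟩)
  · exact ⟨⟨σ, fun _ => 1⟩, fun _ => Or.inl rfl, fun v k => by rw [hw v]; exact (one_mul _).symm⟩
  · refine ⟨⟨1, fun k => if k = i ∨ k = j then -1 else 1⟩, fun k => ?_, fun v k => ?_⟩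
    all_goals dsimp only
    · split <;> [exact Or.inr rfl; exact Or.inl rfl]
    · rw [hw v k]
      simp only [Equiv.Perm.one_apply]
      split_ifs <;> ring


lemma WoD_finite (m : ℕ) : (WoD m : Set (GLQ m)).Finite := by
  have key : ∀ w : (WoD m : Set (GLQ m)), (w : GLQ m) ∈ Mono m := fun w => WoD_le_Mono m w.2
  have : Finite ((WoD m : Set (GLQ m))) := by
    apply Finite.of_injective (fun w : (WoD m : Set (GLQ m)) =>
      ((Classical.choose (key w)).1,
        fun k => decide ((Classical.choose (key w)).2 k = 1)))
    intro w1 w2 h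
    obtain ⟨hs1, hw1⟩ := Classical.choose_spec (key w1)
    obtain ⟨hs2, hw2⟩ := Classical.choose_spec (key w2)
    rw [Prod.mk.injEq] at h
    have hσ : (Classical.choose (key w1)).1 = (Classical.choose (key w2)).1 := h.1
    have hsg : (Classical.choose (key w1)).2 = (Classical.choose (key w2)).2 := by
      funext k
      have hk := congrFun h.2 k
      rcases hs1 k with h1 | h1 <;> rcases hs2 k with h2 | h2 <;>
        rw [h1, h2] <;> simp [h1, h2] at hk ⊢ <;> norm_num at hk
    apply Subtype.ext
    apply LinearEquiv.toLinearMap_injective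
    apply LinearMap.ext
    intro v
    funext k
    show (w1 : GLQ m) v k = (w2 : GLQ m) v k
    rw [hw1 v k, hw2 v k, hσ, hsg]
  exact Set.toFinite _

lemma WoD_le_WD (m : ℕ) : WoD m ≤ WD m :=
  Subgroup.closure_mono Set.subset_union_left

lemma sigma0_mem_WD (m : ℕ) : sigma0 m ∈ WD m :=
  Subgroup.subset_closure (Or.inr (sigma0_mem_flip0 m))

lemma WD_eq (m : ℕ) :
    (WD m : Set (GLQ m)) =
      ↑(WoD m) ∪ (fun w => w * sigma0 m) '' ↑(WoD m) := by
  apply Set.Subset.antisymm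
  · intro x hx
    let U : Subgroup (GLQ m) :=
      { carrier := ↑(WoD m) ∪ (fun w => w * sigma0 m) '' ↑(WoD m)
        one_mem' := Or.inl (one_mem _)
        mul_mem' := by
          rintro a b (ha | ⟨a', ha', rfl⟩) (hb | ⟨b', hb', rfl⟩)
          · exact Or.inl (mul_mem ha hb)
          · exact Or.inr ⟨a * b', mul_mem ha hb', (mul_assoc a b' _).symm⟩
          · refine Or.inr ⟨a' * b, mul_mem ha' hb, ?_⟩
            show a' * b * sigma0 m = a' * sigma0 m * b
            rw [mul_assoc, mul_assoc, ← sigma0_comm m (WoD_le_Hfix m hb)]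
          · refine Or.inl ?_
            have : a' * sigma0 m * (b' * sigma0 m) = a' * b' := by
              rw [mul_assoc, ← mul_assoc (sigma0 m), sigma0_comm m (WoD_le_Hfix m hb'),
                mul_assoc, sigma0_sq, mul_one]
            rw [this]
            exact mul_mem ha' hb'
        inv_mem' := by
          rintro a (ha | ⟨a', ha', rfl⟩)
          · exact Or.inl (inv_mem ha)
          · refine Or.inr ⟨a'⁻¹, inv_mem ha', ?_⟩
            show a'⁻¹ * sigma0 m = (a' * sigma0 m)⁻¹
            rw [mul_inv_rev, sigma0_inv, sigma0_comm m (WoD_le_Hfix m (inv_mem ha'))] }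
    have hle : WD m ≤ U := by
      rw [WD, Subgroup.closure_le]
      rintro w ((hw | hw) | hw)
      · exact Or.inl (Subgroup.subset_closure (Or.inl hw))
      · exact Or.inl (Subgroup.subset_closure (Or.inr hw))
      · exact Or.inr ⟨1, one_mem _, by rw [flip0_eq_sigma0 m hw]; exact one_mul _⟩
    exact hle hx
  · rintro x (hx | ⟨x', hx', rfl⟩)
    · exact WoD_le_WD m hx
    · exact mul_mem (WoD_le_WD m hx') (sigma0_mem_WD m)


lemma ee_half_plus (m : ℕ) (α : Fin (m+1) → ℚ) :
    ee m ((1/2 : ℚ) • α) + ee m (-((1/2 : ℚ) • α)) =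
      ee m ((1/2 : ℚ) • α) * (1 + ee m (-α)) := by
  rw [mul_add, mul_one, ← ee_add]
  congr 2
  module

lemma ee_half_sub (m : ℕ) (α : Fin (m+1) → ℚ) :
    ee m ((1/2 : ℚ) • α) - ee m (-((1/2 : ℚ) • α)) =
      ee m ((1/2 : ℚ) • α) * (1 - ee m (-α)) := by
  rw [mul_sub, mul_one, ← ee_add]
  congr 2
  module

lemma ee_sum (m : ℕ) {ι : Type*} (s : Finset ι) (f : ι → Fin (m+1) → ℚ) :
    ee m (∑ i ∈ s, f i) = ∏ i ∈ s, ee m (f i) := by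
  classical
  induction s using Finset.induction_on with
  | empty => simp [ee_zero]
  | insert _ _ h ih => rw [Finset.sum_insert h, Finset.prod_insert h, ee_add, ih]

lemma eps_apply_self (m i : ℕ) : eps m i (i : Fin (m+1)) = 1 := Pi.single_eq_same _ _

lemma fin_cast_ne (m : ℕ) {i j : ℕ} (hi : i ≤ m) (hj : j ≤ m) (hij : i ≠ j) :
    (i : Fin (m+1)) ≠ (j : Fin (m+1)) := by
  intro h
  apply hij
  have := congrArg Fin.val h
  rwa [Fin.val_cast_of_lt (by omega), Fin.val_cast_of_lt (by omega)] at this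

lemma eps_apply_ne (m : ℕ) {i j : ℕ} (hi : i ≤ m) (hj : j ≤ m) (hij : i ≠ j) :
    eps m i (j : Fin (m+1)) = 0 :=
  Pi.single_eq_of_ne (fin_cast_ne m hj hi (Ne.symm hij)) _

lemma neg_sub_eps_ne_zero (m : ℕ) {i j : ℕ} (hi : i ≤ m) (hj : j ≤ m) (hij : i ≠ j) :
    -(eps m i - eps m j) ≠ (0 : Fin (m+1) → ℚ) := by
  intro h
  have := congrFun h (j : Fin (m+1))
  rw [Pi.neg_apply, Pi.sub_apply, eps_apply_ne m hi hj hij, eps_apply_self] at this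
  norm_num at this

lemma neg_add_eps_ne_zero (m : ℕ) {i j : ℕ} (hi : i ≤ m) (hj : j ≤ m) (hij : i ≠ j) :
    -(eps m i + eps m j) ≠ (0 : Fin (m+1) → ℚ) := by
  intro h
  have := congrFun h (j : Fin (m+1))
  rw [Pi.neg_apply, Pi.add_apply, eps_apply_ne m hi hj hij, eps_apply_self] at this
  norm_num at this

lemma smul_eps0_ne_zero (m : ℕ) {t : ℚ} (ht : t ≠ 0) : t • eps m 0 ≠ (0 : Fin (m+1) → ℚ) := by
  intro h
  have := congrFun h ((0 : ℕ) : Fin (m+1))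
  rw [Pi.smul_apply, eps_apply_self, smul_eq_mul, mul_one] at this
  exact ht (by simpa using this)

lemma rho_sum (m : ℕ) :
    ∑ p ∈ Finset.filter (fun p : ℕ × ℕ => p.1 < p.2) (Finset.Icc 1 m ×ˢ Finset.Icc 1 m),
      eps m p.1 = rhooD m := by
  rw [Finset.sum_filter, Finset.sum_product]
  have step : ∀ i ∈ Finset.Icc 1 m,
      (∑ j ∈ Finset.Icc 1 m, if i < j then eps m i else 0) = (m - i : ℕ) • eps m i := by
    intro i _
    rw [← Finset.sum_filter, Finset.sum_const]
    congr 1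
    have hset : Finset.filter (fun j => i < j) (Finset.Icc 1 m) = Finset.Icc (i+1) m := by
      ext j
      simp only [Finset.mem_filter, Finset.mem_Icc]
      omega
    rw [hset, Nat.card_Icc]
    omega
  rw [Finset.sum_congr rfl step]
  funext k
  rw [Finset.sum_apply]
  rcases eq_or_ne k 0 with rfl | hk
  · rw [show rhooD m 0 = 0 from if_pos rfl]
    apply Finset.sum_eq_zero
    intro i hi
    rw [Finset.mem_Icc] at hi
    rw [Pi.smul_apply, show (0 : Fin (m+1)) = ((0 : ℕ) : Fin (m+1)) by simp,
      eps_apply_ne m (by omega) (by omega) (by omega), smul_zero]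
  · have hk1 : 1 ≤ k.val := by
      rcases Nat.eq_zero_or_pos k.val with h | h
      · exact absurd (Fin.ext h) hk
      · exact h
    have hkm : k.val ≤ m := by omega
    rw [Finset.sum_eq_single k.val]
    · have h1 : eps m (k.val) k = 1 := by
        rw [eps, Fin.cast_val_eq_self, Pi.single_eq_same]
      rw [Pi.smul_apply, h1, nsmul_eq_mul, mul_one]
      simp only [rhooD]
      rw [if_neg hk, Nat.cast_sub hkm]
    · intro i hi hne
      rw [Finset.mem_Icc] at hi
      have h0 : eps m i k = 0 := by
        rw [eps]
        apply Pi.single_eq_of_ne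
        intro h
        apply hne.symm
        have := congrArg Fin.val h
        rwa [Fin.val_cast_of_lt (by omega)] at this
      rw [Pi.smul_apply, h0, smul_zero]
    · intro h
      exact absurd (Finset.mem_Icc.mpr ⟨hk1, hkm⟩) h

lemma keyE {K : Type*} [Field K] (E : ℚ → K) (hE : ∀ s t, E (s + t) = E s * E t)
    (x mq : ℚ) :
    E mq * (E (x + 1 - mq) - E (mq - 1 - x)) * (1 - E (-2)) =
      (E x - E (2*mq - 2 - x)) * (E 1 - E (-1)) := by
  have h : ∀ a b c : ℚ, a + b = c → E a * E b = E c := by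
    rintro a b c rfl
    exact (hE a b).symm
  have h1 := h mq (x+1-mq) (x+1) (by ring)
  have h2 := h mq (mq-1-x) (2*mq-1-x) (by ring)
  have h3 := h (x+1) (-2) (x-1) (by ring)
  have h4 := h (2*mq-1-x) (-2) (2*mq-3-x) (by ring)
  have h5 := h x 1 (x+1) (by ring)
  have h6 := h x (-1) (x-1) (by ring)
  have h7 := h (2*mq-2-x) 1 (2*mq-1-x) (by ring)
  have h8 := h (2*mq-2-x) (-1) (2*mq-3-x) (by ring)
  linear_combination (1 - E (-2)) * h1 - (1 - E (-2)) * h2 - h3 + h4 - h5 + h6 + h7 - h8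


lemma prod_num (m : ℕ) :
    (∏ i ∈ Finset.Icc 1 m,
        ((ee m ((1/2 : ℚ) • (eps m 0 - eps m i)) +
            ee m (-((1/2 : ℚ) • (eps m 0 - eps m i)))) *
         (ee m ((1/2 : ℚ) • (eps m 0 + eps m i)) +
            ee m (-((1/2 : ℚ) • (eps m 0 + eps m i)))))) =
    ee m ((m : ℚ) • eps m 0) *
      ∏ i ∈ Finset.Icc 1 m,
        ((1 + ee m (-(eps m 0 - eps m i))) * (1 + ee m (-(eps m 0 + eps m i)))) := by
  have step : ∀ i ∈ Finset.Icc 1 m,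
      ((ee m ((1/2 : ℚ) • (eps m 0 - eps m i)) +
          ee m (-((1/2 : ℚ) • (eps m 0 - eps m i)))) *
       (ee m ((1/2 : ℚ) • (eps m 0 + eps m i)) +
          ee m (-((1/2 : ℚ) • (eps m 0 + eps m i))))) =
      ee m (eps m 0) *
        ((1 + ee m (-(eps m 0 - eps m i))) * (1 + ee m (-(eps m 0 + eps m i)))) := by
    intro i _
    rw [ee_half_plus, ee_half_plus, mul_mul_mul_comm, ← ee_add]
    congr 2
    module
  rw [Finset.prod_congr rfl step, Finset.prod_mul_distrib, Finset.prod_const, Nat.card_Icc,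
    Nat.add_sub_cancel, ee_pow]

lemma prod_den (m : ℕ) :
    (∏ p ∈ Finset.filter (fun p : ℕ × ℕ => p.1 < p.2) (Finset.Icc 1 m ×ˢ Finset.Icc 1 m),
        ((ee m ((1/2 : ℚ) • (eps m p.1 - eps m p.2)) -
            ee m (-((1/2 : ℚ) • (eps m p.1 - eps m p.2)))) *
         (ee m ((1/2 : ℚ) • (eps m p.1 + eps m p.2)) -
            ee m (-((1/2 : ℚ) • (eps m p.1 + eps m p.2)))))) =
    ee m (rhooD m) *
      ∏ p ∈ Finset.filter (fun p : ℕ × ℕ => p.1 < p.2) (Finset.Icc 1 m ×ˢ Finset.Icc 1 m),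
        ((1 - ee m (-(eps m p.1 - eps m p.2))) * (1 - ee m (-(eps m p.1 + eps m p.2)))) := by
  have step : ∀ p ∈ Finset.filter (fun p : ℕ × ℕ => p.1 < p.2)
      (Finset.Icc 1 m ×ˢ Finset.Icc 1 m),
      ((ee m ((1/2 : ℚ) • (eps m p.1 - eps m p.2)) -
          ee m (-((1/2 : ℚ) • (eps m p.1 - eps m p.2)))) *
       (ee m ((1/2 : ℚ) • (eps m p.1 + eps m p.2)) -
          ee m (-((1/2 : ℚ) • (eps m p.1 + eps m p.2))))) =
      ee m (eps m p.1) *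
        ((1 - ee m (-(eps m p.1 - eps m p.2))) * (1 - ee m (-(eps m p.1 + eps m p.2)))) := by
    intro p _
    rw [ee_half_sub, ee_half_sub, mul_mul_mul_comm, ← ee_add]
    congr 2
    module
  rw [Finset.prod_congr rfl step, Finset.prod_mul_distrib, ← ee_sum, rho_sum]

lemma Qden_ne_zero (m : ℕ) :
    (∏ p ∈ Finset.filter (fun p : ℕ × ℕ => p.1 < p.2) (Finset.Icc 1 m ×ˢ Finset.Icc 1 m),
        ((1 - ee m (-(eps m p.1 - eps m p.2))) * (1 - ee m (-(eps m p.1 + eps m p.2)))))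
      ≠ 0 := by
  apply Finset.prod_ne_zero_iff.mpr
  intro p hp
  rw [Finset.mem_filter, Finset.mem_product, Finset.mem_Icc, Finset.mem_Icc] at hp
  obtain ⟨⟨⟨h1, h2⟩, ⟨h3, h4⟩⟩, h5⟩ := hp
  exact mul_ne_zero
    (one_sub_ee_ne_zero m (neg_sub_eps_ne_zero m h2 h4 (by omega)))
    (one_sub_ee_ne_zero m (neg_add_eps_ne_zero m h2 h4 (by omega)))

lemma det_mul_sigma0 (m : ℕ) (w : GLQ m) :
    LinearMap.det (LinearEquiv.toLinearMap (w * sigma0 m)) =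
      - LinearMap.det (LinearEquiv.toLinearMap w) := by
  rw [show LinearEquiv.toLinearMap (w * sigma0 m) =
      LinearEquiv.toLinearMap w * LinearEquiv.toLinearMap (sigma0 m) from rfl,
    map_mul, det_sigma0, mul_neg_one]

lemma final_algebra {K : Type*} [Field K] (a q s r E0 Ey Em Ec Ecm E1 En1 Z2 : K)
    (hq : q ≠ 0) (hr : r ≠ 0) (hz1 : 1 - Z2 ≠ 0) (hz2 : E1 - En1 ≠ 0)
    (hkey : Em * (Ec - Ecm) * (1 - Z2) = (E0 - Ey) * (E1 - En1)) :
    a / (1 - Z2) * E0 * (s / q) - a / (1 - Z2) * Ey * (s / q) =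
      Em * a / ((E1 - En1) * (r * q)) * (Ec * (r * s) + -(Ecm * (r * s))) := by
  have h1 : a / (1 - Z2) * E0 * (s / q) - a / (1 - Z2) * Ey * (s / q) =
      (a * s * (E0 - Ey)) / ((1 - Z2) * q) := by
    field_simp
  have h2 : Em * a / ((E1 - En1) * (r * q)) * (Ec * (r * s) + -(Ecm * (r * s))) =
      (a * s * (Em * (Ec - Ecm))) / ((E1 - En1) * q) := by
    rw [div_mul_eq_mul_div,
      div_eq_div_iff (mul_ne_zero hz2 (mul_ne_zero hr hq)) (mul_ne_zero hz2 hq)]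
    ring
  rw [h1, h2, div_eq_div_iff (mul_ne_zero hz1 hq) (mul_ne_zero hz2 hq)]
  linear_combination (-(a * s * q)) * hkey

end Aux

/-- Lemma 2.4 for `osp(2m|2)`: for `λ ∈ 𝒫` with `λ₀ ≥ m`,
`chM(λ) − chM(λ^δ) = (∏_{α∈Δ₁⁺}(e^{α/2}+e^{−α/2}) / ∏_{α∈Δ₀⁺}(e^{α/2}−e^{−α/2}))
· Σ_{w∈W} det(w) e^{w(λ+ρ)}`. -/
theorem lemma24_D (m : ℕ) (hm : 2 ≤ m) (l : Fin (m+1) → ℚ)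
    (hP : PD m l) (h0 : (m : ℚ) ≤ l 0) :
    chMD m l - chMD m (deltaD m l) =
      ((∏ i ∈ Finset.Icc 1 m,
          ((ee m ((1/2 : ℚ) • (eps m 0 - eps m i)) +
              ee m (-((1/2 : ℚ) • (eps m 0 - eps m i)))) *
           (ee m ((1/2 : ℚ) • (eps m 0 + eps m i)) +
              ee m (-((1/2 : ℚ) • (eps m 0 + eps m i)))))) /
        ((ee m (eps m 0) - ee m (-(eps m 0))) *
          ∏ p ∈ Finset.filter (fun p : ℕ × ℕ => p.1 < p.2)
              (Finset.Icc 1 m ×ˢ Finset.Icc 1 m),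
            ((ee m ((1/2 : ℚ) • (eps m p.1 - eps m p.2)) -
                ee m (-((1/2 : ℚ) • (eps m p.1 - eps m p.2)))) *
             (ee m ((1/2 : ℚ) • (eps m p.1 + eps m p.2)) -
                ee m (-((1/2 : ℚ) • (eps m p.1 + eps m p.2))))))) *
      ∑ᶠ w ∈ (WD m : Set (GLQ m)),
        ((LinearMap.det (LinearEquiv.toLinearMap w) : ℚ) : Km m) *
          ee m (w (l + rhoD m)) := by
  classical
  have hfin : (WoD m : Set (GLQ m)).Finite := WoD_finite m
  have hWDcoe : (WD m : Set (GLQ m)) =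
      ↑(hfin.toFinset ∪ hfin.toFinset.image (fun w => w * sigma0 m)) := by
    rw [WD_eq m, Finset.coe_union, Finset.coe_image, hfin.coe_toFinset]
  have hcoe : (WoD m : Set (GLQ m)) = ↑hfin.toFinset := hfin.coe_toFinset.symm
  rw [hWDcoe, finsum_mem_coe_finset]
  unfold chMD
  -- basic coordinate facts
  have heps : eps m 0 = (Pi.single 0 1 : Fin (m+1) → ℚ) := by rw [eps, Nat.cast_zero]
  have heps00 : eps m 0 (0 : Fin (m+1)) = 1 := by rw [heps, Pi.single_eq_same]
  have heps0k : ∀ k : Fin (m+1), k ≠ 0 → eps m 0 k = 0 := fun k hk => by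
    rw [heps, Pi.single_eq_of_ne hk]
  have hd0 : deltaD m l 0 = 2*(m:ℚ) - 2 - l 0 := by simp [deltaD]
  have harg : deltaD m l - deltaD m l 0 • eps m 0 = l - l 0 • eps m 0 := by
    funext k
    rcases eq_or_ne k 0 with rfl | hk
    · rw [Pi.sub_apply, Pi.sub_apply, Pi.smul_apply, Pi.smul_apply, smul_eq_mul, smul_eq_mul,
        heps00, mul_one, mul_one, sub_self, sub_self]
    · rw [Pi.sub_apply, Pi.sub_apply, Pi.smul_apply, Pi.smul_apply, smul_eq_mul, smul_eq_mul,
        heps0k k hk, mul_zero, mul_zero, sub_zero, sub_zero]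
      simp only [deltaD]
      rw [if_neg hk]
  rw [harg, hd0]
  unfold chLD
  rw [finsum_mem_eq_finite_toFinset_sum _ hfin]
  -- split the sum over WD
  have hdisj : Disjoint hfin.toFinset (hfin.toFinset.image (fun w => w * sigma0 m)) := by
    rw [Finset.disjoint_left]
    intro a haF haI
    rw [Finset.mem_image] at haI
    obtain ⟨b, hb, rfl⟩ := haI
    have haW : b * sigma0 m ∈ WoD m := hfin.mem_toFinset.mp haF
    have hbW : b ∈ WoD m := hfin.mem_toFinset.mp hb
    have hσW : sigma0 m ∈ WoD m := by
      have h2 := mul_mem (inv_mem hbW) haW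
      rwa [← mul_assoc, inv_mul_cancel, one_mul] at h2
    exact sigma0_not_mem_Hfix m (WoD_le_Hfix m hσW)
  have hinj : ∀ x ∈ hfin.toFinset, ∀ y ∈ hfin.toFinset,
      x * sigma0 m = y * sigma0 m → x = y := fun x _ y _ h => mul_right_cancel h
  rw [Finset.sum_union hdisj, Finset.sum_image hinj]
  -- structural facts about elements of WoD
  have hσδ : sigma0 m (eps m 0) = -(eps m 0) := by
    funext k
    rw [sigma0_apply, Pi.neg_apply]
    rcases eq_or_ne k 0 with rfl | hk
    · rw [if_pos rfl]
    · rw [if_neg hk, heps0k k hk, neg_zero]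
  have hμ0 : (l - l 0 • eps m 0 + rhooD m) 0 = 0 := by
    rw [Pi.add_apply, Pi.sub_apply, Pi.smul_apply, smul_eq_mul, heps00, mul_one]
    simp only [rhooD, eq_self_iff_true, ite_true]
    ring
  have hσμ : sigma0 m (l - l 0 • eps m 0 + rhooD m) = l - l 0 • eps m 0 + rhooD m := by
    funext k
    rw [sigma0_apply]
    rcases eq_or_ne k 0 with rfl | hk
    · rw [if_pos rfl, hμ0, neg_zero]
    · rw [if_neg hk]
  have hsplit : l + rhoD m =
      (l 0 + 1 - (m:ℚ)) • eps m 0 + (l - l 0 • eps m 0 + rhooD m) := by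
    funext k
    rcases eq_or_ne k 0 with rfl | hk
    · simp only [Pi.add_apply, Pi.sub_apply, Pi.smul_apply, smul_eq_mul, heps00, mul_one,
        rhoD, rhooD, eq_self_iff_true, ite_true]
      ring
    · simp only [Pi.add_apply, Pi.sub_apply, Pi.smul_apply, smul_eq_mul, heps0k k hk, mul_zero,
        rhoD, rhooD, if_neg hk]
      ring
  have hwδ : ∀ w ∈ hfin.toFinset, w (eps m 0) = eps m 0 := by
    intro w hw
    rw [heps]
    exact (WoD_le_Hfix m (hfin.mem_toFinset.mp hw)).2
  -- the two partial sums
  have hsum1 : (∑ w ∈ hfin.toFinset,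
        ((LinearMap.det (LinearEquiv.toLinearMap w) : ℚ) : Km m) * ee m (w (l + rhoD m))) =
      ee m ((l 0 + 1 - (m:ℚ)) • eps m 0) * (ee m (rhooD m) *
        ∑ w ∈ hfin.toFinset,
          ((LinearMap.det (LinearEquiv.toLinearMap w) : ℚ) : Km m) *
            ee m (w (l - l 0 • eps m 0 + rhooD m) - rhooD m)) := by
    rw [Finset.mul_sum, Finset.mul_sum]
    apply Finset.sum_congr rfl
    intro w hw
    have hwvec : w (l + rhoD m) =
        (l 0 + 1 - (m:ℚ)) • eps m 0 + w (l - l 0 • eps m 0 + rhooD m) := by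
      rw [hsplit, map_add, map_smul, hwδ w hw]
    rw [hwvec, ee_add,
      show w (l - l 0 • eps m 0 + rhooD m) =
        rhooD m + (w (l - l 0 • eps m 0 + rhooD m) - rhooD m) from by abel, ee_add]
    ring
  have hsum2 : (∑ w ∈ hfin.toFinset,
        ((LinearMap.det (LinearEquiv.toLinearMap (w * sigma0 m)) : ℚ) : Km m) *
          ee m ((w * sigma0 m) (l + rhoD m))) =
      -(ee m (((m:ℚ) - 1 - l 0) • eps m 0) * (ee m (rhooD m) *
        ∑ w ∈ hfin.toFinset,
          ((LinearMap.det (LinearEquiv.toLinearMap w) : ℚ) : Km m) *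
            ee m (w (l - l 0 • eps m 0 + rhooD m) - rhooD m))) := by
    rw [Finset.mul_sum, Finset.mul_sum, ← Finset.sum_neg_distrib]
    apply Finset.sum_congr rfl
    intro w hw
    have hdet : ((LinearMap.det (LinearEquiv.toLinearMap (w * sigma0 m)) : ℚ) : Km m) =
        -((LinearMap.det (LinearEquiv.toLinearMap w) : ℚ) : Km m) := by
      rw [det_mul_sigma0]
      push_cast
      ring
    have hvec : (w * sigma0 m) (l + rhoD m) =
        ((m:ℚ) - 1 - l 0) • eps m 0 + w (l - l 0 • eps m 0 + rhooD m) := by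
      show w (sigma0 m (l + rhoD m)) = _
      have hσv : sigma0 m (l + rhoD m) =
          ((m:ℚ) - 1 - l 0) • eps m 0 + (l - l 0 • eps m 0 + rhooD m) := by
        rw [hsplit, map_add, map_smul, hσδ, hσμ]
        module
      rw [hσv, map_add, map_smul, hwδ w hw]
    rw [hdet, hvec, ee_add,
      show w (l - l 0 • eps m 0 + rhooD m) =
        rhooD m + (w (l - l 0 • eps m 0 + rhooD m) - rhooD m) from by abel, ee_add]
    ring
  rw [hsum1, hsum2, prod_num m, prod_den m]
  -- convert remaining exponentials to scalar form
  have hone : ee m (eps m 0) = ee m ((1:ℚ) • eps m 0) := by rw [one_smul]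
  have hnegone : ee m (-(eps m 0)) = ee m ((-1:ℚ) • eps m 0) := by rw [neg_one_smul]
  have hneg2 : ee m (-((2:ℚ) • eps m 0)) = ee m ((-2:ℚ) • eps m 0) := by
    congr 1
    module
  rw [hone, hnegone, hneg2]
  -- abbreviations
  have hE : ∀ s t : ℚ, ee m ((s + t) • eps m 0) = ee m (s • eps m 0) * ee m (t • eps m 0) := by
    intro s t
    rw [← ee_add, add_smul]
  have hkey := keyE (fun t => ee m (t • eps m 0)) hE (l 0) (m : ℚ)
  have hq := Qden_ne_zero m
  have hz1 : (1 : Km m) - ee m ((-2:ℚ) • eps m 0) ≠ 0 :=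
    one_sub_ee_ne_zero m (smul_eps0_ne_zero m (by norm_num))
  have hz2 : ee m ((1:ℚ) • eps m 0) - ee m ((-1:ℚ) • eps m 0) ≠ 0 := by
    have h2 : ee m ((1:ℚ) • eps m 0) - ee m ((-1:ℚ) • eps m 0) =
        ee m ((1:ℚ) • eps m 0) * (1 - ee m ((-2:ℚ) • eps m 0)) := by
      rw [mul_sub, mul_one, ← ee_add]
      congr 2
      module
    rw [h2]
    exact mul_ne_zero (ee_ne_zero m _) hz1
  have hr : ee m (rhooD m) ≠ 0 := ee_ne_zero m _
  exact final_algebra _ _ _ _ _ _ _ _ _ _ _ _ hq hr hz1 hz2 hkey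
end
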